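/- arXiv:math/0608555 — 2 statements merged into one kernel-verified Lean document; each statement's English description precedes it below -/
import Mathlib

section
/- Let n ≥ 1 be an integer. Let w, g : ℝ → ℝ be smooth functions with (g·w)'(y) = 0 for all y (so that the vector field ξ, acting on functions by ξ(f) = g·f', preserves the 1-form w·dy). Let F : ℝ → ℂ be smooth, let λ ∈ ℂ with λ ≠ 0, and suppose H : ℝ → ℂ is a smooth function satisfying H(y)·g(y)·F'(y) = λ·F(y) for all y, and such that |ξ^i(H)(y)| ≤ C for all y ∈ ℝ and all 0 ≤ i ≤ n, where ξ^i denotes the i-fold iterate of ξ and C > 0. Then there exists a constant c_n > 0, depending only on n, such that for every smooth compactly supported φ : ℝ → ℂ for which all the integrals below are finite, |∫_ℝ F(y)·φ(y)·w(y) dy| ≤ c_n · max(C,1)^n · |λ|^{−n} · Σ_{i=0}^{n} ∫_ℝ |F(y)| · |ξ^i(φ)(y)| · |w(y)| dy. -/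
open MeasureTheory Filter

/-- The vector field `ξ = g·(d/dy)` acting on smooth complex-valued functions. -/
noncomputable def xi (g : ℝ → ℝ) (f : ℝ → ℂ) : ℝ → ℂ := fun y => (g y : ℂ) * deriv f y

lemma xi_contDiff {g : ℝ → ℝ} {f : ℝ → ℂ} (hg : ContDiff ℝ (⊤ : ℕ∞) g)
    (hf : ContDiff ℝ (⊤ : ℕ∞) f) : ContDiff ℝ (⊤ : ℕ∞) (xi g f) := by
  have h1 : ContDiff ℝ (⊤ : ℕ∞) (deriv f) := (contDiff_infty_iff_deriv.mp hf).2
  exact (Complex.ofRealCLM.contDiff.comp hg).mul h1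

lemma xi_iter_contDiff {g : ℝ → ℝ} {f : ℝ → ℂ} (hg : ContDiff ℝ (⊤ : ℕ∞) g)
    (hf : ContDiff ℝ (⊤ : ℕ∞) f) (i : ℕ) : ContDiff ℝ (⊤ : ℕ∞) ((xi g)^[i] f) := by
  induction i generalizing f with
  | zero => exact hf
  | succ k ih =>
    rw [Function.iterate_succ_apply]
    exact ih (xi_contDiff hg hf)

lemma xi_iter_hasCompactSupport {g : ℝ → ℝ} {f : ℝ → ℂ} (hf : HasCompactSupport f) (i : ℕ) :
    HasCompactSupport ((xi g)^[i] f) := by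
  induction i generalizing f with
  | zero => exact hf
  | succ k ih =>
    rw [Function.iterate_succ_apply]
    exact ih (HasCompactSupport.mul_left hf.deriv)

lemma xi_add {g : ℝ → ℝ} {f h : ℝ → ℂ} (hf : Differentiable ℝ f) (hh : Differentiable ℝ h) :
    xi g (fun y => f y + h y) = fun y => xi g f y + xi g h y := by
  funext y
  simp only [xi]
  rw [deriv_fun_add (hf y) (hh y)]
  ring

lemma xi_iter_add {g : ℝ → ℝ} (hg : ContDiff ℝ (⊤ : ℕ∞) g) {f h : ℝ → ℂ}
    (hf : ContDiff ℝ (⊤ : ℕ∞) f) (hh : ContDiff ℝ (⊤ : ℕ∞) h) (i : ℕ) :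
    (xi g)^[i] (fun y => f y + h y) = fun y => (xi g)^[i] f y + (xi g)^[i] h y := by
  induction i generalizing f h with
  | zero => rfl
  | succ k ih =>
    rw [Function.iterate_succ_apply, Function.iterate_succ_apply, Function.iterate_succ_apply,
      xi_add (hf.differentiable (by norm_num)) (hh.differentiable (by norm_num))]
    exact ih (xi_contDiff hg hf) (xi_contDiff hg hh)

lemma xi_mul {g : ℝ → ℝ} {f h : ℝ → ℂ} (hf : Differentiable ℝ f) (hh : Differentiable ℝ h) :
    xi g (fun y => f y * h y) = fun y => xi g f y * h y + f y * xi g h y := by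
  funext y
  simp only [xi]
  rw [deriv_fun_mul (hf y) (hh y)]
  ring

lemma xi_pointwise_bound {g : ℝ → ℝ} (hg : ContDiff ℝ (⊤ : ℕ∞) g) {D : ℝ} (hD : 0 ≤ D) :
    ∀ i : ℕ, ∀ h φ : ℝ → ℂ, ContDiff ℝ (⊤ : ℕ∞) h → ContDiff ℝ (⊤ : ℕ∞) φ →
      (∀ j : ℕ, j ≤ i → ∀ y : ℝ, ‖(xi g)^[j] h y‖ ≤ D) →
      ∀ y : ℝ, ‖(xi g)^[i] (fun z => h z * φ z) y‖ ≤
        2 ^ i * D * ∑ j ∈ Finset.range (i + 1), ‖(xi g)^[j] φ y‖ := by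
  intro i
  induction i with
  | zero =>
    intro h φ hh hφ hbnd y
    simpa using mul_le_mul_of_nonneg_right (hbnd 0 le_rfl y) (norm_nonneg (φ y))
  | succ k ih =>
    intro h φ hh hφ hbnd y
    have hdh : Differentiable ℝ h := hh.differentiable (by norm_num)
    have hdφ : Differentiable ℝ φ := hφ.differentiable (by norm_num)
    have e1 : (xi g)^[k+1] (fun z => h z * φ z) =
        (xi g)^[k] (fun z => xi g h z * φ z + h z * xi g φ z) := by
      rw [Function.iterate_succ_apply, xi_mul hdh hdφ]
    have e2 : (xi g)^[k] (fun z => xi g h z * φ z + h z * xi g φ z) =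
        fun z => (xi g)^[k] (fun z => xi g h z * φ z) z +
          (xi g)^[k] (fun z => h z * xi g φ z) z :=
      xi_iter_add hg ((xi_contDiff hg hh).mul hφ) (hh.mul (xi_contDiff hg hφ)) k
    rw [e1, e2]
    have b1 : ‖(xi g)^[k] (fun z => xi g h z * φ z) y‖ ≤
        2 ^ k * D * ∑ j ∈ Finset.range (k + 1), ‖(xi g)^[j] φ y‖ := by
      apply ih (xi g h) φ (xi_contDiff hg hh) hφ
      intro j hj z
      rw [← Function.iterate_succ_apply]
      exact hbnd (j + 1) (by omega) z
    have b2 : ‖(xi g)^[k] (fun z => h z * xi g φ z) y‖ ≤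
        2 ^ k * D * ∑ j ∈ Finset.range (k + 1), ‖(xi g)^[j] (xi g φ) y‖ :=
      ih h (xi g φ) hh (xi_contDiff hg hφ) (fun j hj z => hbnd j (by omega) z) y
    have S1 : ∑ j ∈ Finset.range (k + 1), ‖(xi g)^[j] φ y‖ ≤
        ∑ j ∈ Finset.range (k + 2), ‖(xi g)^[j] φ y‖ :=
      Finset.sum_le_sum_of_subset_of_nonneg (by
        intro x hx; simp only [Finset.mem_range] at *; omega)
        (fun i _ _ => norm_nonneg ((xi g)^[i] φ y))
    have S2 : ∑ j ∈ Finset.range (k + 1), ‖(xi g)^[j] (xi g φ) y‖ ≤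
        ∑ j ∈ Finset.range (k + 2), ‖(xi g)^[j] φ y‖ := by
      have : ∀ j, (xi g)^[j] (xi g φ) = (xi g)^[j+1] φ := fun j =>
        (Function.iterate_succ_apply (xi g) j φ).symm
      simp only [this]
      rw [Finset.sum_range_succ' (fun j => ‖(xi g)^[j] φ y‖) (k+1)]
      exact le_add_of_nonneg_right (norm_nonneg _)
    have hS : (0:ℝ) ≤ ∑ j ∈ Finset.range (k + 2), ‖(xi g)^[j] φ y‖ :=
      Finset.sum_nonneg fun _ _ => norm_nonneg _
    calc ‖(xi g)^[k] (fun z => xi g h z * φ z) y + (xi g)^[k] (fun z => h z * xi g φ z) y‖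
        ≤ ‖(xi g)^[k] (fun z => xi g h z * φ z) y‖ + ‖(xi g)^[k] (fun z => h z * xi g φ z) y‖ :=
          norm_add_le _ _
      _ ≤ 2 ^ k * D * ∑ j ∈ Finset.range (k + 2), ‖(xi g)^[j] φ y‖ +
          2 ^ k * D * ∑ j ∈ Finset.range (k + 2), ‖(xi g)^[j] φ y‖ :=
          add_le_add (b1.trans (mul_le_mul_of_nonneg_left S1 (by positivity)))
            (b2.trans (mul_le_mul_of_nonneg_left S2 (by positivity)))
      _ = 2 ^ (k+1) * D * ∑ j ∈ Finset.range (k + 2), ‖(xi g)^[j] φ y‖ := by ring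

lemma xi_ibp {w g : ℝ → ℝ} (hw : ContDiff ℝ (⊤ : ℕ∞) w) (hg : ContDiff ℝ (⊤ : ℕ∞) g)
    (hgw : ∀ y, deriv (fun z => g z * w z) y = 0)
    {F ψ : ℝ → ℂ} (hF : ContDiff ℝ (⊤ : ℕ∞) F) (hψ : ContDiff ℝ (⊤ : ℕ∞) ψ)
    (hcψ : HasCompactSupport ψ) :
    ∫ y : ℝ, xi g F y * ψ y * (w y : ℂ) = -∫ y : ℝ, F y * xi g ψ y * (w y : ℂ) := by
  have hdF : Differentiable ℝ F := hF.differentiable (by norm_num)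
  have hdψ : Differentiable ℝ ψ := hψ.differentiable (by norm_num)
  have hdgw : Differentiable ℝ (fun z => g z * w z) :=
    ((hg.mul hw).differentiable (by norm_num))
  -- derivative of u = F ψ (gw : ℂ)
  set u : ℝ → ℂ := fun y => F y * ψ y * ((g y * w y : ℝ) : ℂ) with hu
  have hder : ∀ y : ℝ, HasDerivAt u
      ((deriv F y * ψ y + F y * deriv ψ y) * ((g y * w y : ℝ) : ℂ)) y := by
    intro y
    have h1 : HasDerivAt (fun z => F z * ψ z) (deriv F y * ψ y + F y * deriv ψ y) y :=
      (hdF y).hasDerivAt.mul (hdψ y).hasDerivAt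
    have h2 : HasDerivAt (fun z => ((g z * w z : ℝ) : ℂ)) ((0 : ℝ) : ℂ) y := by
      have := ((hdgw y).hasDerivAt)
      rw [hgw y] at this
      exact this.ofReal_comp
    have := h1.mul h2
    simpa [hu, Complex.ofReal_mul, Pi.mul_def] using this
  -- continuity helpers
  have hcontF : Continuous F := hF.continuous
  have hcontψ : Continuous ψ := hψ.continuous
  have hcontdF : Continuous (deriv F) := (contDiff_infty_iff_deriv.mp hF).2.continuous
  have hcontdψ : Continuous (deriv ψ) := (contDiff_infty_iff_deriv.mp hψ).2.continuous
  have hcontg : Continuous g := hg.continuous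
  have hcontw : Continuous w := hw.continuous
  -- the two pieces are continuous with compact support, hence integrable
  have hint1 : Integrable (fun y : ℝ => deriv F y * ψ y * ((g y * w y : ℝ) : ℂ)) := by
    apply Continuous.integrable_of_hasCompactSupport
    · exact (hcontdF.mul hcontψ).mul (Complex.continuous_ofReal.comp (hcontg.mul hcontw))
    · exact ((hcψ.mul_left).mul_right)
  have hint2 : Integrable (fun y : ℝ => F y * deriv ψ y * ((g y * w y : ℝ) : ℂ)) := by
    apply Continuous.integrable_of_hasCompactSupport
    · exact (hcontF.mul hcontdψ).mul (Complex.continuous_ofReal.comp (hcontg.mul hcontw))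
    · exact ((hcψ.deriv.mul_left).mul_right)
  have hintsum : Integrable
      (fun y : ℝ => (deriv F y * ψ y + F y * deriv ψ y) * ((g y * w y : ℝ) : ℂ)) := by
    have := hint1.add hint2
    convert this using 1
    · rfl
    funext y; simp only [Pi.add_apply]; ring
  -- compact support of u and limits at ±∞
  have hcu : HasCompactSupport u := (hcψ.mul_left).mul_right
  have hzero : Tendsto u (Filter.cocompact ℝ) (nhds 0) := hcu.is_zero_at_infty
  have hbot : Tendsto u atBot (nhds 0) := hzero.mono_left atBot_le_cocompact
  have htop : Tendsto u atTop (nhds 0) := hzero.mono_left atTop_le_cocompact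
  have hzero_int : ∫ y : ℝ, (deriv F y * ψ y + F y * deriv ψ y) * ((g y * w y : ℝ) : ℂ) = 0 := by
    have := integral_of_hasDerivAt_of_tendsto hder hintsum hbot htop
    simpa using this
  have hzero_int' : (∫ y : ℝ, deriv F y * ψ y * ((g y * w y : ℝ) : ℂ)) +
      (∫ y : ℝ, F y * deriv ψ y * ((g y * w y : ℝ) : ℂ)) = 0 := by
    rw [← MeasureTheory.integral_add hint1 hint2, ← hzero_int]
    congr 1; funext y; ring
  have e1 : (fun y : ℝ => xi g F y * ψ y * (w y : ℂ)) =
      fun y : ℝ => deriv F y * ψ y * ((g y * w y : ℝ) : ℂ) := by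
    funext y; simp only [xi]; push_cast; ring
  have e2 : (fun y : ℝ => F y * xi g ψ y * (w y : ℂ)) =
      fun y : ℝ => F y * deriv ψ y * ((g y * w y : ℝ) : ℂ) := by
    funext y; simp only [xi]; push_cast; ring
  rw [e1, e2]
  linear_combination hzero_int'

lemma xi_key {w g : ℝ → ℝ} (hw : ContDiff ℝ (⊤ : ℕ∞) w) (hg : ContDiff ℝ (⊤ : ℕ∞) g)
    (hgw : ∀ y, deriv (fun z => g z * w z) y = 0)
    {F H : ℝ → ℂ} {lam : ℂ} (hF : ContDiff ℝ (⊤ : ℕ∞) F) (hlam : lam ≠ 0)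
    (hH : ContDiff ℝ (⊤ : ℕ∞) H)
    (hHF : ∀ y, H y * (g y : ℂ) * deriv F y = lam * F y)
    {φ : ℝ → ℂ} (hφ : ContDiff ℝ (⊤ : ℕ∞) φ) (hcφ : HasCompactSupport φ) :
    ∫ y : ℝ, F y * φ y * (w y : ℂ) =
      -lam⁻¹ * ∫ y : ℝ, F y * xi g (fun z => H z * φ z) y * (w y : ℂ) := by
  have hψ : ContDiff ℝ (⊤ : ℕ∞) (fun z => H z * φ z) := hH.mul hφ
  have hcψ : HasCompactSupport (fun z => H z * φ z) := hcφ.mul_left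
  have hibp := xi_ibp hw hg hgw hF hψ hcψ
  have e1 : (fun y : ℝ => xi g F y * (H y * φ y) * (w y : ℂ)) =
      fun y : ℝ => lam * (F y * φ y * (w y : ℂ)) := by
    funext y
    simp only [xi]
    calc (g y : ℂ) * deriv F y * (H y * φ y) * (w y : ℂ)
        = (H y * (g y : ℂ) * deriv F y) * φ y * (w y : ℂ) := by ring
      _ = lam * F y * φ y * (w y : ℂ) := by rw [hHF y]
      _ = lam * (F y * φ y * (w y : ℂ)) := by ring
  rw [e1] at hibp
  rw [MeasureTheory.integral_const_mul] at hibp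
  field_simp at hibp ⊢
  linear_combination hibp

lemma main_aux (k : ℕ) :
    ∃ c : ℝ, 0 < c ∧
      ∀ (w g : ℝ → ℝ) (F H : ℝ → ℂ) (lam : ℂ) (C : ℝ) (φ : ℝ → ℂ),
        ContDiff ℝ (⊤ : ℕ∞) w → ContDiff ℝ (⊤ : ℕ∞) g →
        (∀ y, deriv (fun z => g z * w z) y = 0) →
        ContDiff ℝ (⊤ : ℕ∞) F → lam ≠ 0 → ContDiff ℝ (⊤ : ℕ∞) H →
        (∀ y, H y * (g y : ℂ) * deriv F y = lam * F y) →
        0 < C →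
        (∀ i : ℕ, i ≤ k → ∀ y : ℝ, ‖(xi g)^[i] H y‖ ≤ C) →
        ContDiff ℝ (⊤ : ℕ∞) φ → HasCompactSupport φ →
        ‖∫ y : ℝ, F y * φ y * (w y : ℂ)‖ ≤
          c * max C 1 ^ k * ‖lam‖⁻¹ ^ k *
            ∑ i ∈ Finset.range (k + 1), ∫ y : ℝ, ‖F y‖ * ‖(xi g)^[i] φ y‖ * |w y| := by
  induction k with
  | zero =>
    refine ⟨1, one_pos, ?_⟩
    intro w g F H lam C φ hw hg hgw hF hlam hH hHF hC hbnd hφ hcφ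
    have h0 : ‖∫ y : ℝ, F y * φ y * (w y : ℂ)‖ ≤ ∫ y : ℝ, ‖F y‖ * ‖φ y‖ * |w y| := by
      refine (norm_integral_le_integral_norm _).trans_eq ?_
      congr 1; funext y
      rw [norm_mul, norm_mul, Complex.norm_real, Real.norm_eq_abs]
    simpa using h0
  | succ k ih =>
    obtain ⟨c, hc, ihc⟩ := ih
    refine ⟨c * (k + 1) * 2 ^ (k + 1), by positivity, ?_⟩
    intro w g F H lam C φ hw hg hgw hF hlam hH hHF hC hbnd hφ hcφ
    set D := max C 1 with hD
    have hD1 : (1:ℝ) ≤ D := le_max_right _ _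
    have hD0 : (0:ℝ) ≤ D := le_trans zero_le_one hD1
    set φ' : ℝ → ℂ := xi g (fun z => H z * φ z) with hφ'def
    have hφ'smooth : ContDiff ℝ (⊤ : ℕ∞) φ' := xi_contDiff hg (hH.mul hφ)
    have hcφ' : HasCompactSupport φ' := by
      have : HasCompactSupport (fun z => H z * φ z) := hcφ.mul_left
      exact HasCompactSupport.mul_left this.deriv
    -- key identity
    have hkey := xi_key hw hg hgw hF hlam hH hHF hφ hcφ
    -- apply induction hypothesis to φ'
    have hIH := ihc w g F H lam C φ' hw hg hgw hF hlam hH hHF hC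
      (fun i hi y => hbnd i (by omega) y) hφ'smooth hcφ'
    -- pointwise bound on ξ^i φ'
    have hpt : ∀ i : ℕ, i ≤ k → ∀ y : ℝ, ‖(xi g)^[i] φ' y‖ ≤
        2 ^ (k + 1) * D * ∑ j ∈ Finset.range (k + 2), ‖(xi g)^[j] φ y‖ := by
      intro i hi y
      have : (xi g)^[i] φ' = (xi g)^[i + 1] (fun z => H z * φ z) := by
        rw [Function.iterate_succ_apply]
      rw [this]
      have hb := xi_pointwise_bound hg hD0 (i + 1) H φ hH hφ
        (fun j hj z => le_trans (hbnd j (by omega) z) (le_max_left _ _)) y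
      refine hb.trans ?_
      have h2 : (2:ℝ) ^ (i + 1) ≤ 2 ^ (k + 1) := by
        apply pow_le_pow_right₀ (by norm_num) (by omega)
      have hsub : ∑ j ∈ Finset.range (i + 2), ‖(xi g)^[j] φ y‖ ≤
          ∑ j ∈ Finset.range (k + 2), ‖(xi g)^[j] φ y‖ :=
        Finset.sum_le_sum_of_subset_of_nonneg
          (by intro x hx; simp only [Finset.mem_range] at *; omega)
          (fun j _ _ => norm_nonneg ((xi g)^[j] φ y))
      have hsnn : (0:ℝ) ≤ ∑ j ∈ Finset.range (i + 2), ‖(xi g)^[j] φ y‖ :=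
        Finset.sum_nonneg fun j _ => norm_nonneg _
      calc (2:ℝ) ^ (i + 1) * D * ∑ j ∈ Finset.range (i + 2), ‖(xi g)^[j] φ y‖
          ≤ 2 ^ (k + 1) * D * ∑ j ∈ Finset.range (i + 2), ‖(xi g)^[j] φ y‖ := by
            apply mul_le_mul_of_nonneg_right _ hsnn
            exact mul_le_mul_of_nonneg_right h2 hD0
        _ ≤ 2 ^ (k + 1) * D * ∑ j ∈ Finset.range (k + 2), ‖(xi g)^[j] φ y‖ := by
            apply mul_le_mul_of_nonneg_left hsub (by positivity)
    -- integral bound on each term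
    have hcontF : Continuous F := hF.continuous
    have hcontw : Continuous w := hw.continuous
    have hintj : ∀ j : ℕ, Integrable (fun y => ‖F y‖ * ‖(xi g)^[j] φ y‖ * |w y|) := by
      intro j
      apply Continuous.integrable_of_hasCompactSupport
      · exact ((hcontF.norm.mul
          ((xi_iter_contDiff hg hφ j).continuous.norm)).mul hcontw.abs)
      · have h1 : HasCompactSupport ((xi g)^[j] φ) := xi_iter_hasCompactSupport hcφ j
        have h2 : HasCompactSupport (fun y => ‖(xi g)^[j] φ y‖) := h1.norm
        exact (h2.mul_left).mul_right
    have hIint : ∀ i : ℕ, i ≤ k →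
        (∫ y : ℝ, ‖F y‖ * ‖(xi g)^[i] φ' y‖ * |w y|) ≤
          2 ^ (k + 1) * D * ∑ j ∈ Finset.range (k + 2),
            ∫ y : ℝ, ‖F y‖ * ‖(xi g)^[j] φ y‖ * |w y| := by
      intro i hi
      have hGint : Integrable (fun y : ℝ => ∑ j ∈ Finset.range (k + 2),
          2 ^ (k + 1) * D * (‖F y‖ * ‖(xi g)^[j] φ y‖ * |w y|)) := by
        apply MeasureTheory.integrable_finset_sum
        intro j _
        exact (hintj j).const_mul _
      have hle : ∀ y : ℝ, ‖F y‖ * ‖(xi g)^[i] φ' y‖ * |w y| ≤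
          ∑ j ∈ Finset.range (k + 2), 2 ^ (k + 1) * D * (‖F y‖ * ‖(xi g)^[j] φ y‖ * |w y|) := by
        intro y
        have := hpt i hi y
        calc ‖F y‖ * ‖(xi g)^[i] φ' y‖ * |w y|
            ≤ ‖F y‖ * (2 ^ (k + 1) * D * ∑ j ∈ Finset.range (k + 2), ‖(xi g)^[j] φ y‖) * |w y| := by
              apply mul_le_mul_of_nonneg_right _ (abs_nonneg _)
              exact mul_le_mul_of_nonneg_left this (norm_nonneg _)
          _ = ∑ j ∈ Finset.range (k + 2), 2 ^ (k + 1) * D * (‖F y‖ * ‖(xi g)^[j] φ y‖ * |w y|) := by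
              simp only [Finset.mul_sum, Finset.sum_mul]
              exact Finset.sum_congr rfl fun j _ => by ring
      calc (∫ y : ℝ, ‖F y‖ * ‖(xi g)^[i] φ' y‖ * |w y|)
          ≤ ∫ y : ℝ, ∑ j ∈ Finset.range (k + 2),
              2 ^ (k + 1) * D * (‖F y‖ * ‖(xi g)^[j] φ y‖ * |w y|) := by
            apply MeasureTheory.integral_mono_of_nonneg
            · exact Filter.Eventually.of_forall fun y => by positivity
            · exact hGint
            · exact Filter.Eventually.of_forall hle
        _ = 2 ^ (k + 1) * D * ∑ j ∈ Finset.range (k + 2),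
              ∫ y : ℝ, ‖F y‖ * ‖(xi g)^[j] φ y‖ * |w y| := by
            rw [MeasureTheory.integral_finset_sum _ (fun j _ => (hintj j).const_mul _)]
            rw [Finset.mul_sum]
            congr 1; funext j
            rw [MeasureTheory.integral_const_mul]
    -- combine
    have hS0 : (0:ℝ) ≤ ∑ j ∈ Finset.range (k + 2), ∫ y : ℝ, ‖F y‖ * ‖(xi g)^[j] φ y‖ * |w y| :=
      Finset.sum_nonneg fun j _ => MeasureTheory.integral_nonneg fun y => by positivity
    have hnormeq : ‖∫ y : ℝ, F y * φ y * (w y : ℂ)‖ =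
        ‖lam‖⁻¹ * ‖∫ y : ℝ, F y * φ' y * (w y : ℂ)‖ := by
      rw [hkey, norm_mul, norm_neg, norm_inv]
    rw [hnormeq]
    have hsum' : ∑ i ∈ Finset.range (k + 1), ∫ y : ℝ, ‖F y‖ * ‖(xi g)^[i] φ' y‖ * |w y| ≤
        (k + 1) * (2 ^ (k + 1) * D * ∑ j ∈ Finset.range (k + 2),
          ∫ y : ℝ, ‖F y‖ * ‖(xi g)^[j] φ y‖ * |w y|) := by
      calc ∑ i ∈ Finset.range (k + 1), ∫ y : ℝ, ‖F y‖ * ‖(xi g)^[i] φ' y‖ * |w y|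
          ≤ ∑ i ∈ Finset.range (k + 1), (2 ^ (k + 1) * D * ∑ j ∈ Finset.range (k + 2),
              ∫ y : ℝ, ‖F y‖ * ‖(xi g)^[j] φ y‖ * |w y|) :=
            Finset.sum_le_sum fun i hi => hIint i (by simp only [Finset.mem_range] at hi; omega)
        _ = (k + 1) * (2 ^ (k + 1) * D * ∑ j ∈ Finset.range (k + 2),
              ∫ y : ℝ, ‖F y‖ * ‖(xi g)^[j] φ y‖ * |w y|) := by
            rw [Finset.sum_const, Finset.card_range]
            push_cast; ring
    calc ‖lam‖⁻¹ * ‖∫ y : ℝ, F y * φ' y * (w y : ℂ)‖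
        ≤ ‖lam‖⁻¹ * (c * D ^ k * ‖lam‖⁻¹ ^ k *
            ∑ i ∈ Finset.range (k + 1), ∫ y : ℝ, ‖F y‖ * ‖(xi g)^[i] φ' y‖ * |w y|) :=
          mul_le_mul_of_nonneg_left hIH (by positivity)
      _ ≤ ‖lam‖⁻¹ * (c * D ^ k * ‖lam‖⁻¹ ^ k *
            ((k + 1) * (2 ^ (k + 1) * D * ∑ j ∈ Finset.range (k + 2),
              ∫ y : ℝ, ‖F y‖ * ‖(xi g)^[j] φ y‖ * |w y|))) := by
          apply mul_le_mul_of_nonneg_left _ (by positivity)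
          exact mul_le_mul_of_nonneg_left hsum' (by positivity)
      _ = c * (k + 1) * 2 ^ (k + 1) * D ^ (k + 1) * ‖lam‖⁻¹ ^ (k + 1) *
            ∑ i ∈ Finset.range (k + 2), ∫ y : ℝ, ‖F y‖ * ‖(xi g)^[i] φ y‖ * |w y| := by
          ring

/-- Integration by parts bound: if `H · ξ(F) = λ · F` with `H` and its `ξ`-derivatives
bounded by `C`, and `ξ` preserves the 1-form `w dy`, then
`|∫ F φ w| ≤ c_n max(C,1)^n |λ|^{-n} Σ_{i≤n} ∫ |F| |ξ^i φ| |w|`. -/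
theorem stmt_1 (n : ℕ) (hn : 1 ≤ n) :
    ∃ c : ℝ, 0 < c ∧
      ∀ (w g : ℝ → ℝ) (F H : ℝ → ℂ) (lam : ℂ) (C : ℝ) (φ : ℝ → ℂ),
        ContDiff ℝ (⊤ : ℕ∞) w → ContDiff ℝ (⊤ : ℕ∞) g →
        (∀ y, deriv (fun z => g z * w z) y = 0) →
        ContDiff ℝ (⊤ : ℕ∞) F → lam ≠ 0 → ContDiff ℝ (⊤ : ℕ∞) H →
        (∀ y, H y * (g y : ℂ) * deriv F y = lam * F y) →
        0 < C →
        (∀ i : ℕ, i ≤ n → ∀ y : ℝ, ‖(xi g)^[i] H y‖ ≤ C) →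
        ContDiff ℝ (⊤ : ℕ∞) φ → HasCompactSupport φ →
        Integrable (fun y => F y * φ y * (w y : ℂ)) →
        (∀ i : ℕ, i ≤ n → Integrable (fun y => ‖F y‖ * ‖(xi g)^[i] φ y‖ * |w y|)) →
        ‖∫ y : ℝ, F y * φ y * (w y : ℂ)‖ ≤
          c * max C 1 ^ n * ‖lam‖⁻¹ ^ n *
            ∑ i ∈ Finset.range (n + 1), ∫ y : ℝ, ‖F y‖ * ‖(xi g)^[i] φ y‖ * |w y| := by
  obtain ⟨c, hc, hmain⟩ := main_aux n
  exact ⟨c, hc, fun w g F H lam C φ hw hg hgw hF hlam hH hHF hC hbnd hφ hcφ _ _ =>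
    hmain w g F H lam C φ hw hg hgw hF hlam hH hHF hC hbnd hφ hcφ⟩
end

section
/- Fix purely imaginary parameters τ, τ' ∈ iℝ and set 𝒮 = 2(|τ| + |τ'|) + 1. Then there exists a constant C > 0, depending only on τ and τ', such that for every even integer n ≥ 0 and every λ = i·t with real t satisfying t ≥ 𝒮 and t ≥ 4n, and every smooth π-periodic function φ : ℝ → ℂ, one has |G_{λ,n}(φ)| ≤ C · ‖φ‖_{C³} · t^{−3}. -/
open MeasureTheory Real

/-- `pw r z = r^z = exp(z · ln r)` for a real base `r > 0`. -/
noncomputable def pw (r : ℝ) (z : ℂ) : ℂ := Complex.exp (z * (Real.log r : ℂ))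

/-- The kernel `K_{τ,τ',λ}(x,y,z)` of the model trilinear functional. -/
noncomputable def Kker (τ τ' lam : ℂ) (x y z : ℝ) : ℂ :=
  pw |Real.sin (x - y)| ((-τ - τ' + lam - 1) / 2) *
    pw |Real.sin (x - z)| ((-τ + τ' - lam - 1) / 2) *
    pw |Real.sin (y - z)| ((τ - τ' - lam - 1) / 2)

/-- `l_λ(c) = (1/2π) ∫₀^{2π} K_{τ,τ',λ}(y+c, y, 0) dy`. -/
noncomputable def lker (τ τ' lam : ℂ) (c : ℝ) : ℂ :=
  (1 / (2 * (π : ℂ))) * ∫ y in (0 : ℝ)..(2 * π), Kker τ τ' lam (y + c) y 0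

/-- `F_{λ,n}(φ) = ∫₀^{2π} l_λ(c) e^{inc} φ(c) dc`. -/
noncomputable def Ffun (τ τ' lam : ℂ) (n : ℤ) (φ : ℝ → ℂ) : ℂ :=
  ∫ c in (0 : ℝ)..(2 * π),
    lker τ τ' lam c * Complex.exp (Complex.I * (n : ℂ) * (c : ℂ)) * φ c

/-- `k_λ(c) = |sin c|^{(-τ-τ'-1)/2} |sin(c/2)|^{-λ/2} |cos(c/2)|^{λ/2}`. -/
noncomputable def kfun (τ τ' lam : ℂ) (c : ℝ) : ℂ :=
  pw |Real.sin c| ((-τ - τ' - 1) / 2) * pw |Real.sin (c / 2)| (-lam / 2) *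
    pw |Real.cos (c / 2)| (lam / 2)

/-- `G_{λ,n}(φ) = 2 ∫₀^π k_λ(c) e^{inc} φ(c) dc`. -/
noncomputable def Gfun (τ τ' lam : ℂ) (n : ℤ) (φ : ℝ → ℂ) : ℂ :=
  2 * ∫ c in (0 : ℝ)..π,
    kfun τ τ' lam c * Complex.exp (Complex.I * (n : ℂ) * (c : ℂ)) * φ c

/-- Global `C^N`-norm of `φ`. -/
noncomputable def Cnorm (N : ℕ) (φ : ℝ → ℂ) : ℝ :=
  ⨆ (m : Fin (N + 1)) (x : ℝ), ‖iteratedDeriv (m : ℕ) φ x‖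

open Set Filter Topology

noncomputable section

namespace St12

def q (c : ℝ) : ℝ := Real.cos c / Real.sin c
def Q (c : ℝ) : ℂ := (q c : ℂ)
def E0 (α : ℂ) (c : ℝ) : ℂ := Complex.exp (α * (Real.log (Real.sin c) : ℂ))
def E1 (α : ℂ) (c : ℝ) : ℂ := α * Q c * E0 α c
def E2 (α : ℂ) (c : ℝ) : ℂ := (α * (-(1 + Q c ^ 2)) + α ^ 2 * Q c ^ 2) * E0 α c
def E3 (α : ℂ) (c : ℝ) : ℂ :=
  ((3 * α ^ 2 - 2 * α) * Q c * (-(1 + Q c ^ 2)) + α ^ 3 * Q c ^ 3) * E0 α c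

variable {α : ℂ} {c : ℝ}

lemma hq (hs : Real.sin c ≠ 0) : HasDerivAt q (-(1 + q c ^ 2)) c := by
  have h := (Real.hasDerivAt_cos c).div (Real.hasDerivAt_sin c) hs
  refine h.congr_deriv (Eq.symm ?_)
  rw [eq_div_iff (pow_ne_zero 2 hs)]
  have := Real.sin_sq_add_cos_sq c
  simp only [q]
  field_simp
  nlinarith [this]

lemma hQ (hs : Real.sin c ≠ 0) : HasDerivAt Q (-(1 + Q c ^ 2)) c := by
  have := (hq hs).ofReal_comp
  refine this.congr_deriv (Eq.symm ?_)
  simp [Q]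

lemma hlogsin (hs : Real.sin c ≠ 0) :
    HasDerivAt (fun c => Real.log (Real.sin c)) (q c) c := by
  have h := (Real.hasDerivAt_log hs).comp c (Real.hasDerivAt_sin c)
  refine h.congr_deriv (Eq.symm ?_)
  simp [q, div_eq_inv_mul]

lemma hE0 (hs : Real.sin c ≠ 0) : HasDerivAt (E0 α) (E1 α c) c := by
  have h := (((hlogsin hs).ofReal_comp).const_mul α).cexp
  refine h.congr_deriv (Eq.symm ?_)
  simp only [E1, E0, Q]
  ring

lemma hE1 (hs : Real.sin c ≠ 0) : HasDerivAt (E1 α) (E2 α c) c := by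
  have h := (((hQ hs).const_mul α).mul (hE0 (α := α) hs))
  refine h.congr_deriv (Eq.symm ?_)
  simp only [E1, E2]
  ring

lemma hE2 (hs : Real.sin c ≠ 0) : HasDerivAt (E2 α) (E3 α c) c := by
  have hfun : E2 α = fun c => ((α ^ 2 - α) * (Q c * Q c) - α) * E0 α c := by
    funext x; simp only [E2]; ring
  rw [hfun]
  have hq2 := (hQ hs).mul (hQ hs)
  have h := ((hq2.const_mul (α ^ 2 - α)).sub_const α).mul (hE0 (α := α) hs)
  refine h.congr_deriv (Eq.symm ?_)
  simp only [E1, E3, Pi.mul_apply]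
  push_cast
  ring


def dR (n t c : ℝ) : ℝ := 2 * n * Real.sin c - t
def g0F (n t : ℝ) (c : ℝ) : ℂ := -2 * Complex.I * (Real.sin c : ℂ) / ((dR n t c : ℝ) : ℂ)
def g1F (n t : ℝ) (c : ℝ) : ℂ := 2 * Complex.I * (t : ℂ) * (Real.cos c : ℂ) / ((dR n t c : ℝ) : ℂ) ^ 2
def g2F (n t : ℝ) (c : ℝ) : ℂ :=
  2 * Complex.I * (t : ℂ) * (-(Real.sin c : ℂ) / ((dR n t c : ℝ) : ℂ) ^ 2
    - 4 * (n : ℂ) * (Real.cos c : ℂ) ^ 2 / ((dR n t c : ℝ) : ℂ) ^ 3)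
def g3F (n t : ℝ) (c : ℝ) : ℂ :=
  2 * Complex.I * (t : ℂ) * (-(Real.cos c : ℂ) / ((dR n t c : ℝ) : ℂ) ^ 2
    + 12 * (n : ℂ) * (Real.sin c : ℂ) * (Real.cos c : ℂ) / ((dR n t c : ℝ) : ℂ) ^ 3
    + 24 * (n : ℂ) ^ 2 * (Real.cos c : ℂ) ^ 3 / ((dR n t c : ℝ) : ℂ) ^ 4)

variable {n t : ℝ}

lemma hdC (n t : ℝ) (c : ℝ) :
    HasDerivAt (fun c => ((dR n t c : ℝ) : ℂ)) ((2 * n * Real.cos c : ℝ) : ℂ) c := by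
  have h : HasDerivAt (dR n t) (2 * n * Real.cos c) c := by
    exact ((Real.hasDerivAt_sin c).const_mul (2 * n)).sub_const t
  exact h.ofReal_comp

lemma hdne {c : ℝ} (hd : dR n t c ≠ 0) : ((dR n t c : ℝ) : ℂ) ≠ 0 := by
  exact_mod_cast hd

lemma hg0 (hd : dR n t c ≠ 0) : HasDerivAt (g0F n t) (g1F n t c) c := by
  have h := (((Real.hasDerivAt_sin c).ofReal_comp).const_mul (-2 * Complex.I)).div
    (hdC n t c) (hdne hd)
  refine h.congr_deriv (Eq.symm ?_)
  rw [g1F, div_eq_div_iff (pow_ne_zero 2 (hdne hd)) (pow_ne_zero 2 (hdne hd))]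
  simp only [dR]
  push_cast
  ring

lemma hg1 (hd : dR n t c ≠ 0) : HasDerivAt (g1F n t) (g2F n t c) c := by
  have hnum := ((Real.hasDerivAt_cos c).ofReal_comp).const_mul (2 * Complex.I * (t : ℂ))
  have hden := (hdC n t c).mul (hdC n t c)
  have hden' : ∀ x, ((dR n t x : ℝ) : ℂ) * ((dR n t x : ℝ) : ℂ) = ((dR n t x : ℝ) : ℂ) ^ 2 := by
    intro x; ring
  have h := hnum.div hden (by simpa using mul_ne_zero (hdne hd) (hdne hd))
  have heq : g1F n t = fun x => 2 * Complex.I * (t : ℂ) * (Real.cos x : ℂ) /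
      (((dR n t x : ℝ) : ℂ) * ((dR n t x : ℝ) : ℂ)) := by
    funext x; rw [g1F, hden' x]
  rw [heq]
  refine h.congr_deriv (Eq.symm ?_)
  rw [g2F]
  have h2 := hdne hd
  simp only [Pi.mul_apply, Pi.div_apply]
  field_simp
  simp only [dR]
  push_cast
  ring

lemma hg2 (hd : dR n t c ≠ 0) : HasDerivAt (g2F n t) (g3F n t c) c := by
  have h2 := hdne hd
  have hsin := (Real.hasDerivAt_sin c).ofReal_comp
  have hcos := (Real.hasDerivAt_cos c).ofReal_comp
  have hden2 := (hdC n t c).mul (hdC n t c)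
  have hden3 := ((hdC n t c).mul (hdC n t c)).mul (hdC n t c)
  have hA := (hsin.neg).div hden2 (by simpa using mul_ne_zero h2 h2)
  have hB := ((hcos.mul hcos).const_mul (4 * (n : ℂ))).div hden3
    (by simpa using mul_ne_zero (mul_ne_zero h2 h2) h2)
  have heq : g2F n t = fun x => 2 * Complex.I * (t : ℂ) *
      (-(Real.sin x : ℂ) / (((dR n t x : ℝ) : ℂ) * ((dR n t x : ℝ) : ℂ))
       - 4 * (n : ℂ) * ((Real.cos x : ℂ) * (Real.cos x : ℂ)) /
         ((((dR n t x : ℝ) : ℂ) * ((dR n t x : ℝ) : ℂ)) * ((dR n t x : ℝ) : ℂ))) := by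
    funext x; rw [g2F]; ring
  rw [heq]
  have h := ((hA.sub hB).const_mul (2 * Complex.I * (t : ℂ)))
  refine h.congr_deriv (Eq.symm ?_)
  rw [g3F]
  simp only [Pi.mul_apply, Pi.div_apply, Pi.sub_apply, Pi.neg_apply]
  field_simp
  simp only [dR]
  push_cast
  ring

def psF (n t c : ℝ) : ℝ :=
  n * c - t / 2 * Real.log (Real.sin (c / 2)) + t / 2 * Real.log (Real.cos (c / 2))
def wF (n t : ℝ) (c : ℝ) : ℂ := Complex.exp (Complex.I * ((psF n t c : ℝ) : ℂ))

lemma half_mem {c : ℝ} (hc : c ∈ Ioo 0 π) :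
    0 < Real.sin (c / 2) ∧ 0 < Real.cos (c / 2) := by
  constructor
  · exact Real.sin_pos_of_pos_of_lt_pi (by linarith [hc.1]) (by nlinarith [hc.2, Real.pi_pos])
  · exact Real.cos_pos_of_mem_Ioo ⟨by nlinarith [hc.1, Real.pi_pos], by linarith [hc.2, Real.pi_pos]⟩

lemma sin_half_sq {c : ℝ} : Real.sin c = 2 * Real.sin (c / 2) * Real.cos (c / 2) := by
  have := Real.sin_two_mul (c / 2)
  rw [show 2 * (c / 2) = c by ring] at this
  linarith

lemma hps {c : ℝ} (hc : c ∈ Ioo 0 π) :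
    HasDerivAt (psF n t) (n - t / (2 * Real.sin c)) c := by
  obtain ⟨hs2, hc2⟩ := half_mem hc
  have hhalf : HasDerivAt (fun c : ℝ => c / 2) (1 / 2) c := (hasDerivAt_id c).div_const 2
  have hsin : HasDerivAt (fun c => Real.sin (c / 2)) (Real.cos (c / 2) * (1 / 2)) c :=
    (Real.hasDerivAt_sin _).comp c hhalf
  have hcos : HasDerivAt (fun c => Real.cos (c / 2)) (-Real.sin (c / 2) * (1 / 2)) c :=
    (Real.hasDerivAt_cos _).comp c hhalf
  have hlog1 : HasDerivAt (fun c => Real.log (Real.sin (c / 2)))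
      ((Real.sin (c / 2))⁻¹ * (Real.cos (c / 2) * (1 / 2))) c :=
    by have := (Real.hasDerivAt_log hs2.ne').comp c hsin; exact this
  have hlog2 : HasDerivAt (fun c => Real.log (Real.cos (c / 2)))
      ((Real.cos (c / 2))⁻¹ * (-Real.sin (c / 2) * (1 / 2))) c :=
    by have := (Real.hasDerivAt_log hc2.ne').comp c hcos; exact this
  have h := (((hasDerivAt_id c).const_mul n).sub (hlog1.const_mul (t / 2))).add
    (hlog2.const_mul (t / 2))
  have hsc : Real.sin c ≠ 0 := by
    rw [sin_half_sq]; positivity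
  refine h.congr_deriv (Eq.symm ?_)
  rw [sin_half_sq]
  field_simp
  linear_combination (t) *
    Real.sin_sq_add_cos_sq (c / 2)

lemma hw {c : ℝ} (hc : c ∈ Ioo 0 π) :
    HasDerivAt (wF n t)
      (Complex.I * ((n - t / (2 * Real.sin c) : ℝ) : ℂ) * wF n t c) c := by
  have h := (((hps (n := n) (t := t) hc).ofReal_comp).const_mul Complex.I).cexp
  refine h.congr_deriv (Eq.symm ?_)
  rw [wF]; ring

lemma norm_wF (n t c : ℝ) : ‖wF n t c‖ = 1 := by
  rw [wF, Complex.norm_exp]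
  simp [Complex.mul_re]

def A0 (α : ℂ) (φ : ℝ → ℂ) (c : ℝ) : ℂ := E0 α c * φ c
def A1 (α : ℂ) (φ : ℝ → ℂ) (c : ℝ) : ℂ := E1 α c * φ c + E0 α c * deriv^[1] φ c
def A2 (α : ℂ) (φ : ℝ → ℂ) (c : ℝ) : ℂ :=
  (E2 α c * φ c + 2 * (E1 α c * deriv^[1] φ c)) + E0 α c * deriv^[2] φ c
def A3 (α : ℂ) (φ : ℝ → ℂ) (c : ℝ) : ℂ :=
  ((E3 α c * φ c + 3 * (E2 α c * deriv^[1] φ c)) + 3 * (E1 α c * deriv^[2] φ c))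
    + E0 α c * deriv^[3] φ c

variable {φ : ℝ → ℂ}

lemma hdphi (hφ : ContDiff ℝ (⊤ : ℕ∞) φ) (j : ℕ) (c : ℝ) :
    HasDerivAt (deriv^[j] φ) (deriv^[j + 1] φ c) c := by
  have h : DifferentiableAt ℝ (deriv^[j] φ) c :=
    ((hφ.iterate_deriv j).differentiable (by simp)).differentiableAt
  rw [Function.iterate_succ_apply']
  exact h.hasDerivAt

lemma hdphi0 (hφ : ContDiff ℝ (⊤ : ℕ∞) φ) (c : ℝ) :
    HasDerivAt φ (deriv^[1] φ c) c := by
  simpa using hdphi hφ 0 c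

lemma hA0 {c : ℝ} (hs : Real.sin c ≠ 0) (hφ : ContDiff ℝ (⊤ : ℕ∞) φ) :
    HasDerivAt (A0 α φ) (A1 α φ c) c := by
  exact (hE0 (α := α) hs).mul (hdphi0 hφ c)

lemma hA1 {c : ℝ} (hs : Real.sin c ≠ 0) (hφ : ContDiff ℝ (⊤ : ℕ∞) φ) :
    HasDerivAt (A1 α φ) (A2 α φ c) c := by
  have h := ((hE1 (α := α) hs).mul (hdphi0 hφ c)).add
    ((hE0 (α := α) hs).mul (hdphi hφ 1 c))
  refine h.congr_deriv (Eq.symm ?_)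
  simp only [A2]; ring

lemma hA2 {c : ℝ} (hs : Real.sin c ≠ 0) (hφ : ContDiff ℝ (⊤ : ℕ∞) φ) :
    HasDerivAt (A2 α φ) (A3 α φ c) c := by
  have h := (((hE2 (α := α) hs).mul (hdphi0 hφ c)).add
      (((hE1 (α := α) hs).mul (hdphi hφ 1 c)).const_mul 2)).add
    ((hE0 (α := α) hs).mul (hdphi hφ 2 c))
  refine h.congr_deriv (Eq.symm ?_)
  simp only [A3]; ring

def B1F (α : ℂ) (n t : ℝ) (φ : ℝ → ℂ) (c : ℝ) : ℂ :=
  A1 α φ c * g0F n t c + A0 α φ c * g1F n t c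
def B1dF (α : ℂ) (n t : ℝ) (φ : ℝ → ℂ) (c : ℝ) : ℂ :=
  (A2 α φ c * g0F n t c + 2 * (A1 α φ c * g1F n t c)) + A0 α φ c * g2F n t c
def B1ddF (α : ℂ) (n t : ℝ) (φ : ℝ → ℂ) (c : ℝ) : ℂ :=
  ((A3 α φ c * g0F n t c + 3 * (A2 α φ c * g1F n t c)) + 3 * (A1 α φ c * g2F n t c))
    + A0 α φ c * g3F n t c
def B2F (α : ℂ) (n t : ℝ) (φ : ℝ → ℂ) (c : ℝ) : ℂ :=
  B1dF α n t φ c * g0F n t c + B1F α n t φ c * g1F n t c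
def B2dF (α : ℂ) (n t : ℝ) (φ : ℝ → ℂ) (c : ℝ) : ℂ :=
  (B1ddF α n t φ c * g0F n t c + 2 * (B1dF α n t φ c * g1F n t c))
    + B1F α n t φ c * g2F n t c
def B3F (α : ℂ) (n t : ℝ) (φ : ℝ → ℂ) (c : ℝ) : ℂ :=
  B2dF α n t φ c * g0F n t c + B2F α n t φ c * g1F n t c

lemma hB1 {c : ℝ} (hs : Real.sin c ≠ 0) (hd : dR n t c ≠ 0)
    (hφ : ContDiff ℝ (⊤ : ℕ∞) φ) :
    HasDerivAt (B1F α n t φ) (B1dF α n t φ c) c := by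
  have h := ((hA1 (α := α) hs hφ).mul (hg0 hd)).add ((hA0 (α := α) hs hφ).mul (hg1 hd))
  refine h.congr_deriv (Eq.symm ?_)
  simp only [B1dF]; ring

lemma hB1d {c : ℝ} (hs : Real.sin c ≠ 0) (hd : dR n t c ≠ 0)
    (hφ : ContDiff ℝ (⊤ : ℕ∞) φ) :
    HasDerivAt (B1dF α n t φ) (B1ddF α n t φ c) c := by
  have h := ((((hA2 (α := α) hs hφ).mul (hg0 hd)).add
      (((hA1 (α := α) hs hφ).mul (hg1 hd)).const_mul 2)).add
    ((hA0 (α := α) hs hφ).mul (hg2 hd)))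
  refine h.congr_deriv (Eq.symm ?_)
  simp only [B1ddF]; ring

lemma hB2 {c : ℝ} (hs : Real.sin c ≠ 0) (hd : dR n t c ≠ 0)
    (hφ : ContDiff ℝ (⊤ : ℕ∞) φ) :
    HasDerivAt (B2F α n t φ) (B2dF α n t φ c) c := by
  have h := ((hB1d (α := α) hs hd hφ).mul (hg0 hd)).add
    ((hB1 (α := α) hs hd hφ).mul (hg1 hd))
  refine h.congr_deriv (Eq.symm ?_)
  simp only [B2dF]; ring

lemma gw {c : ℝ} (hs : 0 < Real.sin c) (hd : dR n t c ≠ 0) :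
    g0F n t c * (Complex.I * ((n - t / (2 * Real.sin c) : ℝ) : ℂ)) = 1 := by
  have hsC : (Real.sin c : ℂ) ≠ 0 := by exact_mod_cast hs.ne'
  have hdC2 : ((dR n t c : ℝ) : ℂ) ≠ 0 := hdne hd
  have hX : ((n - t / (2 * Real.sin c) : ℝ) : ℂ)
      = ((dR n t c : ℝ) : ℂ) / (2 * (Real.sin c : ℂ)) := by
    have hXr : (n - t / (2 * Real.sin c)) = dR n t c / (2 * Real.sin c) := by
      rw [dR]; field_simp
    rw [hXr]; push_cast; ring
  rw [g0F, hX]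
  have h2 : -2 * Complex.I * (Real.sin c : ℂ) / ((dR n t c : ℝ) : ℂ) *
      (Complex.I * (((dR n t c : ℝ) : ℂ) / (2 * (Real.sin c : ℂ))))
      = (-(Complex.I * Complex.I)) * ((Real.sin c : ℂ) / (Real.sin c : ℂ)) *
        (((dR n t c : ℝ) : ℂ) / ((dR n t c : ℝ) : ℂ)) := by
    ring
  rw [h2, div_self hsC, div_self hdC2, Complex.I_mul_I]
  ring

lemma hFk {c : ℝ} {B B' : ℝ → ℂ} (hc : c ∈ Ioo 0 π) (hd : dR n t c ≠ 0)
    (hB : HasDerivAt B (B' c) c) :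
    HasDerivAt (fun x => B x * g0F n t x * wF n t x)
      (((B' c * g0F n t c + B c * g1F n t c) + B c) * wF n t c) c := by
  have hs : 0 < Real.sin c := Real.sin_pos_of_pos_of_lt_pi hc.1 hc.2
  have h := (hB.mul (hg0 hd)).mul (hw (n := n) (t := t) hc)
  refine h.congr_deriv (Eq.symm ?_)
  have hgw := gw (n := n) (t := t) hs hd
  simp only [Pi.mul_apply]
  linear_combination (-(B c * wF n t c)) * hgw
lemma nmul {x y : ℂ} {a b : ℝ} (hx : ‖x‖ ≤ a) (hy : ‖y‖ ≤ b) (hb : 0 ≤ b) :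
    ‖x * y‖ ≤ a * b := by
  rw [norm_mul]
  exact mul_le_mul hx hy (norm_nonneg y) (le_trans (norm_nonneg x) hx)

lemma sinpos {c : ℝ} (hc : c ∈ Ioo 0 π) : 0 < Real.sin c :=
  Real.sin_pos_of_pos_of_lt_pi hc.1 hc.2

lemma nE0 {c : ℝ} (hc : c ∈ Ioo 0 π) (hα : α.re = -(1/2)) :
    ‖E0 α c‖ = (Real.sqrt (Real.sin c))⁻¹ := by
  have hs := sinpos hc
  rw [E0, Complex.norm_exp]
  have hre : (α * (Real.log (Real.sin c) : ℂ)).re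
      = -(1/2) * Real.log (Real.sin c) := by
    simp [Complex.mul_re, hα]
  rw [hre]
  rw [show Real.sqrt (Real.sin c) = Real.exp (Real.log (Real.sin c) * (1/2)) by
    rw [← Real.rpow_def_of_pos hs, ← Real.sqrt_eq_rpow]]
  rw [← Real.exp_neg]
  congr 1
  ring

lemma nQ {c : ℝ} (hc : c ∈ Ioo 0 π) : ‖Q c‖ ≤ (Real.sin c)⁻¹ := by
  have hs := sinpos hc
  rw [Q, Complex.norm_real, Real.norm_eq_abs, q, abs_div, abs_of_pos hs]
  calc |Real.cos c| / Real.sin c ≤ 1 / Real.sin c := by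
        gcongr
        exact Real.abs_cos_le_one c
    _ = (Real.sin c)⁻¹ := one_div _

lemma rge1 {c : ℝ} (hc : c ∈ Ioo 0 π) : 1 ≤ (Real.sin c)⁻¹ := by
  have hs := sinpos hc
  rw [le_inv_comm₀] <;> simp [hs, Real.sin_le_one c]

lemma nE1 {c : ℝ} (hc : c ∈ Ioo 0 π) (hα : α.re = -(1/2)) :
    ‖E1 α c‖ ≤ 8 * (1 + ‖α‖) ^ 3 * ((Real.sin c)⁻¹ ^ 1 * (Real.sqrt (Real.sin c))⁻¹) := by
  have hs := sinpos hc
  have hr := rge1 hc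
  have ha := norm_nonneg α
  have hS : (0:ℝ) ≤ (Real.sqrt (Real.sin c))⁻¹ := by positivity
  calc ‖E1 α c‖ = ‖α * Q c‖ * (Real.sqrt (Real.sin c))⁻¹ := by
        rw [E1, norm_mul, nE0 hc hα]
    _ ≤ (‖α‖ * (Real.sin c)⁻¹) * (Real.sqrt (Real.sin c))⁻¹ := by
        gcongr
        rw [norm_mul]
        gcongr
        exact nQ hc
    _ ≤ 8 * (1 + ‖α‖) ^ 3 * ((Real.sin c)⁻¹ ^ 1 * (Real.sqrt (Real.sin c))⁻¹) := by
        rw [pow_one, ← mul_assoc]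
        gcongr
        nlinarith [ha, mul_nonneg ha ha, mul_nonneg (mul_nonneg ha ha) ha]

lemma nE2 {c : ℝ} (hc : c ∈ Ioo 0 π) (hα : α.re = -(1/2)) :
    ‖E2 α c‖ ≤ 8 * (1 + ‖α‖) ^ 3 * ((Real.sin c)⁻¹ ^ 2 * (Real.sqrt (Real.sin c))⁻¹) := by
  have hs := sinpos hc
  have hr := rge1 hc
  have ha := norm_nonneg α
  have hu := nQ hc
  have hu0 := norm_nonneg (Q c)
  have hS : (0:ℝ) ≤ (Real.sqrt (Real.sin c))⁻¹ := by positivity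
  have hfac : ‖α * (-(1 + Q c ^ 2)) + α ^ 2 * Q c ^ 2‖
      ≤ ‖α‖ * (1 + ‖Q c‖ ^ 2) + ‖α‖ ^ 2 * ‖Q c‖ ^ 2 := by
    refine (norm_add_le _ _).trans ?_
    gcongr
    · rw [norm_mul, norm_neg]
      gcongr
      refine (norm_add_le _ _).trans ?_
      simp [norm_pow]
    · rw [norm_mul, norm_pow, norm_pow]
  have hkey : ‖α‖ * (1 + ‖Q c‖ ^ 2) + ‖α‖ ^ 2 * ‖Q c‖ ^ 2
      ≤ 8 * (1 + ‖α‖) ^ 3 * (Real.sin c)⁻¹ ^ 2 := by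
    have hu2 : ‖Q c‖ ^ 2 ≤ (Real.sin c)⁻¹ ^ 2 := pow_le_pow_left₀ hu0 hu 2
    have h1r : (1:ℝ) ≤ (Real.sin c)⁻¹ ^ 2 := by nlinarith
    nlinarith [mul_nonneg ha (sub_nonneg.mpr hu2), mul_nonneg ha (sub_nonneg.mpr h1r),
      mul_nonneg (sq_nonneg ‖α‖) (sub_nonneg.mpr hu2), sq_nonneg ‖α‖,
      mul_nonneg (mul_nonneg ha ha) ha, sq_nonneg ((Real.sin c)⁻¹)]
  calc ‖E2 α c‖ = ‖α * (-(1 + Q c ^ 2)) + α ^ 2 * Q c ^ 2‖ * (Real.sqrt (Real.sin c))⁻¹ := by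
        rw [E2, norm_mul, nE0 hc hα]
    _ ≤ (8 * (1 + ‖α‖) ^ 3 * (Real.sin c)⁻¹ ^ 2) * (Real.sqrt (Real.sin c))⁻¹ := by
        gcongr
        exact hfac.trans hkey
    _ = 8 * (1 + ‖α‖) ^ 3 * ((Real.sin c)⁻¹ ^ 2 * (Real.sqrt (Real.sin c))⁻¹) := by ring

lemma nE3 {c : ℝ} (hc : c ∈ Ioo 0 π) (hα : α.re = -(1/2)) :
    ‖E3 α c‖ ≤ 8 * (1 + ‖α‖) ^ 3 * ((Real.sin c)⁻¹ ^ 3 * (Real.sqrt (Real.sin c))⁻¹) := by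
  have hs := sinpos hc
  have hr := rge1 hc
  have ha := norm_nonneg α
  have hu := nQ hc
  have hu0 := norm_nonneg (Q c)
  have hS : (0:ℝ) ≤ (Real.sqrt (Real.sin c))⁻¹ := by positivity
  have hfac : ‖(3 * α ^ 2 - 2 * α) * Q c * (-(1 + Q c ^ 2)) + α ^ 3 * Q c ^ 3‖
      ≤ (3 * ‖α‖ ^ 2 + 2 * ‖α‖) * ‖Q c‖ * (1 + ‖Q c‖ ^ 2) + ‖α‖ ^ 3 * ‖Q c‖ ^ 3 := by
    refine (norm_add_le _ _).trans ?_
    gcongr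
    · rw [norm_mul, norm_mul, norm_neg]
      gcongr
      · refine (norm_sub_le _ _).trans ?_
        simp [norm_mul, norm_pow]
      · refine (norm_add_le _ _).trans ?_
        simp [norm_pow]
    · rw [norm_mul, norm_pow, norm_pow]
  have hkey : (3 * ‖α‖ ^ 2 + 2 * ‖α‖) * ‖Q c‖ * (1 + ‖Q c‖ ^ 2) + ‖α‖ ^ 3 * ‖Q c‖ ^ 3
      ≤ 8 * (1 + ‖α‖) ^ 3 * (Real.sin c)⁻¹ ^ 3 := by
    set u := ‖Q c‖
    set r := (Real.sin c)⁻¹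
    have hu2 : u ^ 2 ≤ r ^ 2 := pow_le_pow_left₀ hu0 hu 2
    have hu3 : u ^ 3 ≤ r ^ 3 := pow_le_pow_left₀ hu0 hu 3
    have h1r : (1:ℝ) ≤ r := hr
    have hur : u * (1 + u ^ 2) ≤ 2 * r ^ 3 := by nlinarith [mul_nonneg hu0 hu0]
    nlinarith [mul_nonneg (mul_nonneg ha ha) ha, sq_nonneg ‖α‖,
      mul_nonneg (add_nonneg (by positivity : (0:ℝ) ≤ 3 * ‖α‖ ^ 2) (by positivity : (0:ℝ) ≤ 2 * ‖α‖)) (sub_nonneg.mpr hur),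
      mul_nonneg (pow_nonneg ha 3) (sub_nonneg.mpr hu3),
      mul_nonneg (mul_nonneg (mul_nonneg ha ha) ha) (pow_nonneg (by positivity : (0:ℝ) ≤ r) 3),
      pow_nonneg (by positivity : (0:ℝ) ≤ r) 3]
  calc ‖E3 α c‖
      = ‖(3 * α ^ 2 - 2 * α) * Q c * (-(1 + Q c ^ 2)) + α ^ 3 * Q c ^ 3‖
        * (Real.sqrt (Real.sin c))⁻¹ := by
        rw [E3, norm_mul, nE0 hc hα]
    _ ≤ (8 * (1 + ‖α‖) ^ 3 * (Real.sin c)⁻¹ ^ 3) * (Real.sqrt (Real.sin c))⁻¹ := by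
        gcongr
        exact hfac.trans hkey
    _ = 8 * (1 + ‖α‖) ^ 3 * ((Real.sin c)⁻¹ ^ 3 * (Real.sqrt (Real.sin c))⁻¹) := by ring
section Abounds

variable {M : ℝ} {c : ℝ}

lemma one_le_64P : (1:ℝ) ≤ 64 * (1 + ‖α‖) ^ 3 := by
  have ha := norm_nonneg α
  nlinarith [ha, mul_nonneg ha ha, mul_nonneg (mul_nonneg ha ha) ha]

lemma nA0 (hc : c ∈ Ioo 0 π) (hα : α.re = -(1/2))
    (hM : ∀ j : ℕ, j ≤ 3 → ∀ x, ‖deriv^[j] φ x‖ ≤ M) (hM0 : 0 ≤ M) :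
    ‖A0 α φ c‖ ≤ 64 * (1 + ‖α‖) ^ 3 * M *
      ((Real.sin c)⁻¹ ^ 0 * (Real.sqrt (Real.sin c))⁻¹) := by
  have hphi0 : ‖φ c‖ ≤ M := by simpa using hM 0 (by norm_num) c
  have hS : (0:ℝ) ≤ (Real.sqrt (Real.sin c))⁻¹ := by positivity
  have h := nmul (le_of_eq (nE0 (α := α) hc hα)) hphi0 hM0
  calc ‖A0 α φ c‖ ≤ (Real.sqrt (Real.sin c))⁻¹ * M := h
    _ = 1 * (M * ((Real.sin c)⁻¹ ^ 0 * (Real.sqrt (Real.sin c))⁻¹)) := by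
        rw [pow_zero]; ring
    _ ≤ (64 * (1 + ‖α‖) ^ 3) * (M * ((Real.sin c)⁻¹ ^ 0 * (Real.sqrt (Real.sin c))⁻¹)) := by
        refine mul_le_mul_of_nonneg_right one_le_64P ?_
        rw [pow_zero]
        positivity
    _ = 64 * (1 + ‖α‖) ^ 3 * M * ((Real.sin c)⁻¹ ^ 0 * (Real.sqrt (Real.sin c))⁻¹) := by ring

lemma nA1 (hc : c ∈ Ioo 0 π) (hα : α.re = -(1/2))
    (hM : ∀ j : ℕ, j ≤ 3 → ∀ x, ‖deriv^[j] φ x‖ ≤ M) (hM0 : 0 ≤ M) :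
    ‖A1 α φ c‖ ≤ 64 * (1 + ‖α‖) ^ 3 * M *
      ((Real.sin c)⁻¹ ^ 1 * (Real.sqrt (Real.sin c))⁻¹) := by
  have hphi0 : ‖φ c‖ ≤ M := by simpa using hM 0 (by norm_num) c
  have hphi1 : ‖deriv^[1] φ c‖ ≤ M := hM 1 (by norm_num) c
  have hs := sinpos hc
  have hr := rge1 hc
  have ha := norm_nonneg α
  have hS : (0:ℝ) ≤ (Real.sqrt (Real.sin c))⁻¹ := by positivity
  have hP : (0:ℝ) < (1 + ‖α‖) ^ 3 := by positivity
  have hP1 : (1:ℝ) ≤ (1 + ‖α‖) ^ 3 := one_le_pow₀ (by linarith [norm_nonneg α])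
  calc ‖A1 α φ c‖ ≤ ‖E1 α c‖ * M + ‖E0 α c‖ * M := by
        refine (norm_add_le _ _).trans ?_
        exact add_le_add (nmul le_rfl hphi0 hM0) (nmul le_rfl hphi1 hM0)
    _ ≤ (8 * (1 + ‖α‖) ^ 3 * ((Real.sin c)⁻¹ ^ 1 * (Real.sqrt (Real.sin c))⁻¹)) * M
        + (1 * ((Real.sin c)⁻¹ ^ 1 * (Real.sqrt (Real.sin c))⁻¹)) * M := by
        gcongr
        · exact nE1 hc hα
        · rw [nE0 hc hα, pow_one, one_mul]
          nlinarith [hS, hr, mul_nonneg (sub_nonneg.mpr hr) hS]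
    _ = (8 * (1 + ‖α‖) ^ 3 + 1) *
        (((Real.sin c)⁻¹ ^ 1 * (Real.sqrt (Real.sin c))⁻¹) * M) := by ring
    _ ≤ (64 * (1 + ‖α‖) ^ 3) *
        (((Real.sin c)⁻¹ ^ 1 * (Real.sqrt (Real.sin c))⁻¹) * M) := by
        refine mul_le_mul_of_nonneg_right (by nlinarith [hP1]) ?_
        positivity
    _ = 64 * (1 + ‖α‖) ^ 3 * M * ((Real.sin c)⁻¹ ^ 1 * (Real.sqrt (Real.sin c))⁻¹) := by ring

lemma nA2 (hc : c ∈ Ioo 0 π) (hα : α.re = -(1/2))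
    (hM : ∀ j : ℕ, j ≤ 3 → ∀ x, ‖deriv^[j] φ x‖ ≤ M) (hM0 : 0 ≤ M) :
    ‖A2 α φ c‖ ≤ 64 * (1 + ‖α‖) ^ 3 * M *
      ((Real.sin c)⁻¹ ^ 2 * (Real.sqrt (Real.sin c))⁻¹) := by
  have hphi0 : ‖φ c‖ ≤ M := by simpa using hM 0 (by norm_num) c
  have hphi1 : ‖deriv^[1] φ c‖ ≤ M := hM 1 (by norm_num) c
  have hphi2 : ‖deriv^[2] φ c‖ ≤ M := hM 2 (by norm_num) c
  have hs := sinpos hc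
  have hr := rge1 hc
  have ha := norm_nonneg α
  have hS : (0:ℝ) ≤ (Real.sqrt (Real.sin c))⁻¹ := by positivity
  have hP : (0:ℝ) < (1 + ‖α‖) ^ 3 := by positivity
  have hP1 : (1:ℝ) ≤ (1 + ‖α‖) ^ 3 := one_le_pow₀ (by linarith [norm_nonneg α])
  have hr2 : (Real.sin c)⁻¹ ^ 1 ≤ (Real.sin c)⁻¹ ^ 2 := by
    apply pow_le_pow_right₀ hr; norm_num
  have h1 : ‖E2 α c * φ c‖ ≤
      (8 * (1 + ‖α‖) ^ 3 * ((Real.sin c)⁻¹ ^ 2 * (Real.sqrt (Real.sin c))⁻¹)) * M :=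
    nmul (nE2 hc hα) hphi0 hM0
  have h2 : ‖2 * (E1 α c * deriv^[1] φ c)‖ ≤
      2 * ((8 * (1 + ‖α‖) ^ 3 * ((Real.sin c)⁻¹ ^ 2 * (Real.sqrt (Real.sin c))⁻¹)) * M) := by
    rw [norm_mul]
    have : ‖(2:ℂ)‖ = 2 := by norm_num
    rw [this]
    refine mul_le_mul_of_nonneg_left ?_ (by norm_num)
    refine nmul ((nE1 hc hα).trans ?_) hphi1 hM0
    gcongr
  have h3 : ‖E0 α c * deriv^[2] φ c‖ ≤
      (1 * ((Real.sin c)⁻¹ ^ 2 * (Real.sqrt (Real.sin c))⁻¹)) * M := by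
    refine nmul ?_ hphi2 hM0
    rw [nE0 hc hα, one_mul]
    nlinarith [hS, hr2, hr, mul_nonneg (sub_nonneg.mpr (hr.trans (by simpa using hr2))) hS]
  calc ‖A2 α φ c‖ ≤ ‖E2 α c * φ c‖ + ‖2 * (E1 α c * deriv^[1] φ c)‖
        + ‖E0 α c * deriv^[2] φ c‖ := by
        rw [A2]
        exact (norm_add_le _ _).trans (add_le_add_left (norm_add_le _ _) _)
    _ ≤ (8 * (1 + ‖α‖) ^ 3 * 3 + 1) *
        (((Real.sin c)⁻¹ ^ 2 * (Real.sqrt (Real.sin c))⁻¹) * M) := by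
        have := add_le_add (add_le_add h1 h2) h3
        calc ‖E2 α c * φ c‖ + ‖2 * (E1 α c * deriv^[1] φ c)‖ + ‖E0 α c * deriv^[2] φ c‖
            ≤ _ := this
          _ = (8 * (1 + ‖α‖) ^ 3 * 3 + 1) *
              (((Real.sin c)⁻¹ ^ 2 * (Real.sqrt (Real.sin c))⁻¹) * M) := by ring
    _ ≤ (64 * (1 + ‖α‖) ^ 3) *
        (((Real.sin c)⁻¹ ^ 2 * (Real.sqrt (Real.sin c))⁻¹) * M) := by
        refine mul_le_mul_of_nonneg_right (by nlinarith [hP1]) ?_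
        positivity
    _ = 64 * (1 + ‖α‖) ^ 3 * M * ((Real.sin c)⁻¹ ^ 2 * (Real.sqrt (Real.sin c))⁻¹) := by ring

lemma nA3 (hc : c ∈ Ioo 0 π) (hα : α.re = -(1/2))
    (hM : ∀ j : ℕ, j ≤ 3 → ∀ x, ‖deriv^[j] φ x‖ ≤ M) (hM0 : 0 ≤ M) :
    ‖A3 α φ c‖ ≤ 64 * (1 + ‖α‖) ^ 3 * M *
      ((Real.sin c)⁻¹ ^ 3 * (Real.sqrt (Real.sin c))⁻¹) := by
  have hphi0 : ‖φ c‖ ≤ M := by simpa using hM 0 (by norm_num) c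
  have hphi1 : ‖deriv^[1] φ c‖ ≤ M := hM 1 (by norm_num) c
  have hphi2 : ‖deriv^[2] φ c‖ ≤ M := hM 2 (by norm_num) c
  have hphi3 : ‖deriv^[3] φ c‖ ≤ M := hM 3 (by norm_num) c
  have hs := sinpos hc
  have hr := rge1 hc
  have ha := norm_nonneg α
  have hS : (0:ℝ) ≤ (Real.sqrt (Real.sin c))⁻¹ := by positivity
  have hP : (0:ℝ) < (1 + ‖α‖) ^ 3 := by positivity
  have hP1 : (1:ℝ) ≤ (1 + ‖α‖) ^ 3 := one_le_pow₀ (by linarith [norm_nonneg α])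
  have hr13 : (Real.sin c)⁻¹ ^ 1 ≤ (Real.sin c)⁻¹ ^ 3 := by
    apply pow_le_pow_right₀ hr; norm_num
  have hr23 : (Real.sin c)⁻¹ ^ 2 ≤ (Real.sin c)⁻¹ ^ 3 := by
    apply pow_le_pow_right₀ hr; norm_num
  have hr03 : (1:ℝ) ≤ (Real.sin c)⁻¹ ^ 3 := one_le_pow₀ hr
  have h1 : ‖E3 α c * φ c‖ ≤
      (8 * (1 + ‖α‖) ^ 3 * ((Real.sin c)⁻¹ ^ 3 * (Real.sqrt (Real.sin c))⁻¹)) * M :=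
    nmul (nE3 hc hα) hphi0 hM0
  have h2 : ‖3 * (E2 α c * deriv^[1] φ c)‖ ≤
      3 * ((8 * (1 + ‖α‖) ^ 3 * ((Real.sin c)⁻¹ ^ 3 * (Real.sqrt (Real.sin c))⁻¹)) * M) := by
    rw [norm_mul]
    have : ‖(3:ℂ)‖ = 3 := by norm_num
    rw [this]
    refine mul_le_mul_of_nonneg_left ?_ (by norm_num)
    refine nmul ((nE2 hc hα).trans ?_) hphi1 hM0
    gcongr
  have h3 : ‖3 * (E1 α c * deriv^[2] φ c)‖ ≤
      3 * ((8 * (1 + ‖α‖) ^ 3 * ((Real.sin c)⁻¹ ^ 3 * (Real.sqrt (Real.sin c))⁻¹)) * M) := by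
    rw [norm_mul]
    have : ‖(3:ℂ)‖ = 3 := by norm_num
    rw [this]
    refine mul_le_mul_of_nonneg_left ?_ (by norm_num)
    refine nmul ((nE1 hc hα).trans ?_) hphi2 hM0
    gcongr
  have h4 : ‖E0 α c * deriv^[3] φ c‖ ≤
      (1 * ((Real.sin c)⁻¹ ^ 3 * (Real.sqrt (Real.sin c))⁻¹)) * M := by
    refine nmul ?_ hphi3 hM0
    rw [nE0 hc hα, one_mul]
    nlinarith [hS, hr03, mul_nonneg (sub_nonneg.mpr hr03) hS]
  calc ‖A3 α φ c‖ ≤ (‖E3 α c * φ c‖ + ‖3 * (E2 α c * deriv^[1] φ c)‖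
        + ‖3 * (E1 α c * deriv^[2] φ c)‖) + ‖E0 α c * deriv^[3] φ c‖ := by
        rw [A3]
        refine (norm_add_le _ _).trans (add_le_add_left ?_ _)
        exact (norm_add_le _ _).trans (add_le_add_left (norm_add_le _ _) _)
    _ ≤ (8 * (1 + ‖α‖) ^ 3 * 7 + 1) *
        (((Real.sin c)⁻¹ ^ 3 * (Real.sqrt (Real.sin c))⁻¹) * M) := by
        have := add_le_add (add_le_add (add_le_add h1 h2) h3) h4
        refine this.trans (le_of_eq ?_)
        ring
    _ ≤ (64 * (1 + ‖α‖) ^ 3) *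
        (((Real.sin c)⁻¹ ^ 3 * (Real.sqrt (Real.sin c))⁻¹) * M) := by
        refine mul_le_mul_of_nonneg_right (by nlinarith [hP1]) ?_
        positivity
    _ = 64 * (1 + ‖α‖) ^ 3 * M * ((Real.sin c)⁻¹ ^ 3 * (Real.sqrt (Real.sin c))⁻¹) := by ring

end Abounds
section Gbounds

variable {c : ℝ}

lemma nrm_real (x : ℝ) : ‖(x : ℂ)‖ = |x| := by
  rw [Complex.norm_real, Real.norm_eq_abs]

lemma nrm_I : ‖Complex.I‖ = 1 := by
  rw [Complex.norm_I]

lemma dRneg (hc : c ∈ Ioo 0 π) (hn : 0 ≤ n) (hnt : 4 * n ≤ t) :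
    dR n t c ≤ -(t / 2) := by
  have hs := sinpos hc
  have hs1 := Real.sin_le_one c
  rw [dR]
  nlinarith [mul_nonneg hn (sub_nonneg.mpr hs1), mul_nonneg hn hs.le]

lemma dRabs (hc : c ∈ Ioo 0 π) (hn : 0 ≤ n) (hnt : 4 * n ≤ t) (ht : 1 ≤ t) :
    t / 2 ≤ |dR n t c| := by
  have h := dRneg (n := n) (t := t) hc hn hnt
  rw [abs_of_neg (by linarith)]
  linarith

lemma dRne (hc : c ∈ Ioo 0 π) (hn : 0 ≤ n) (hnt : 4 * n ≤ t) (ht : 1 ≤ t) :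
    dR n t c ≠ 0 := by
  have h := dRneg (n := n) (t := t) hc hn hnt
  intro h0
  rw [h0] at h
  linarith

lemma ng0 (hc : c ∈ Ioo 0 π) (hn : 0 ≤ n) (hnt : 4 * n ≤ t) (ht : 1 ≤ t) :
    ‖g0F n t c‖ ≤ 4 * Real.sin c / t := by
  have hs := sinpos hc
  have habs := dRabs (n := n) (t := t) hc hn hnt ht
  have ht0 : (0:ℝ) < t := by linarith
  have hD0 : (0:ℝ) < |dR n t c| := by linarith
  have e0 : ‖g0F n t c‖ = 2 * Real.sin c / |dR n t c| := by
    rw [show g0F n t c = Complex.I * (((-2) * Real.sin c / dR n t c : ℝ) : ℂ) by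
        rw [g0F]; push_cast; ring,
      norm_mul, nrm_I, nrm_real, one_mul, abs_div, abs_mul, abs_neg,
      abs_of_pos hs]
    norm_num
  rw [e0, div_le_div_iff₀ hD0 ht0]
  nlinarith [mul_le_mul_of_nonneg_left habs (by positivity : (0:ℝ) ≤ 4 * Real.sin c)]

lemma ng1 (hc : c ∈ Ioo 0 π) (hn : 0 ≤ n) (hnt : 4 * n ≤ t) (ht : 1 ≤ t) :
    ‖g1F n t c‖ ≤ 8 / t := by
  have hs := sinpos hc
  have habs := dRabs (n := n) (t := t) hc hn hnt ht
  have ht0 : (0:ℝ) < t := by linarith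
  have hD0 : (0:ℝ) < |dR n t c| := by linarith
  have e1 : ‖g1F n t c‖ = 2 * t * |Real.cos c| / |dR n t c| ^ 2 := by
    rw [show g1F n t c = Complex.I * ((2 * t * Real.cos c / (dR n t c) ^ 2 : ℝ) : ℂ) by
        rw [g1F]; push_cast; ring,
      norm_mul, nrm_I, nrm_real, one_mul, abs_div, abs_mul, abs_mul, abs_pow,
      abs_of_pos ht0, sq_abs]
    norm_num
  rw [e1]
  have h2 : (t / 2) ^ 2 ≤ |dR n t c| ^ 2 := by gcongr <;> positivity
  calc 2 * t * |Real.cos c| / |dR n t c| ^ 2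
      ≤ 2 * t * 1 / (t / 2) ^ 2 :=
        div_le_div₀ (by positivity)
          (by nlinarith [Real.abs_cos_le_one c]) (by positivity) h2
    _ = 8 / t := by field_simp; ring

lemma ng2 (hc : c ∈ Ioo 0 π) (hn : 0 ≤ n) (hnt : 4 * n ≤ t) (ht : 1 ≤ t) :
    ‖g2F n t c‖ ≤ 24 / t := by
  have hs := sinpos hc
  have hs1 := Real.sin_le_one c
  have habs := dRabs (n := n) (t := t) hc hn hnt ht
  have ht0 : (0:ℝ) < t := by linarith
  have hD0 : (0:ℝ) < |dR n t c| := by linarith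
  have hcos1 : |Real.cos c| ≤ 1 := Real.abs_cos_le_one c
  have h2 : (t / 2) ^ 2 ≤ |dR n t c| ^ 2 := by gcongr <;> positivity
  have h3 : (t / 2) ^ 3 ≤ |dR n t c| ^ 3 := by gcongr <;> positivity
  have e2 : ‖g2F n t c‖ = 2 * t *
      |(-(Real.sin c) / (dR n t c) ^ 2 - 4 * n * (Real.cos c) ^ 2 / (dR n t c) ^ 3)| := by
    rw [show g2F n t c = (Complex.I * (2 * t : ℝ)) *
        (((-(Real.sin c) / (dR n t c) ^ 2
          - 4 * n * (Real.cos c) ^ 2 / (dR n t c) ^ 3) : ℝ) : ℂ) by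
        rw [g2F]; push_cast; ring,
      norm_mul, norm_mul, nrm_I, nrm_real, nrm_real, one_mul, abs_of_pos (by linarith : (0:ℝ) < 2 * t)]
  rw [e2]
  have hb : |(-(Real.sin c) / (dR n t c) ^ 2 - 4 * n * (Real.cos c) ^ 2 / (dR n t c) ^ 3)|
      ≤ 4 / t ^ 2 + 8 / t ^ 2 := by
    refine (abs_sub _ _).trans ?_
    have i1 : |(-(Real.sin c)) / (dR n t c) ^ 2| ≤ 4 / t ^ 2 := by
      rw [abs_div, abs_neg, abs_of_pos hs, abs_pow, sq_abs]
      calc Real.sin c / (dR n t c) ^ 2 ≤ 1 / (t / 2) ^ 2 := by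
            rw [show (dR n t c) ^ 2 = |dR n t c| ^ 2 by rw [sq_abs]]
            exact div_le_div₀ (by norm_num) hs1 (by positivity) h2
        _ = 4 / t ^ 2 := by field_simp; ring
    have i2 : |4 * n * (Real.cos c) ^ 2 / (dR n t c) ^ 3| ≤ 8 / t ^ 2 := by
      rw [abs_div, abs_mul, abs_mul, abs_pow, abs_of_nonneg hn]
      have e3 : |(dR n t c) ^ 3| = |dR n t c| ^ 3 := abs_pow _ 3
      rw [e3]
      calc |(4:ℝ)| * n * |Real.cos c| ^ 2 / |dR n t c| ^ 3
          ≤ 4 * (t / 4) * 1 / (t / 2) ^ 3 := by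
            refine div_le_div₀ (by positivity) ?_ (by positivity) h3
            have h4' : |(4:ℝ)| = 4 := by norm_num
            rw [h4']
            have hcos2 : |Real.cos c| ^ 2 ≤ 1 := by
              nlinarith [abs_nonneg (Real.cos c)]
            nlinarith [mul_nonneg hn (sub_nonneg.mpr hcos2),
              mul_nonneg hn (sq_nonneg (|Real.cos c|))]
        _ = 8 / t ^ 2 := by field_simp; ring
    exact add_le_add i1 i2
  calc 2 * t * |(-(Real.sin c) / (dR n t c) ^ 2 - 4 * n * (Real.cos c) ^ 2 / (dR n t c) ^ 3)|
      ≤ 2 * t * (4 / t ^ 2 + 8 / t ^ 2) := by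
        exact mul_le_mul_of_nonneg_left hb (by positivity)
    _ = 24 / t := by field_simp; ring

lemma ng3 (hc : c ∈ Ioo 0 π) (hn : 0 ≤ n) (hnt : 4 * n ≤ t) (ht : 1 ≤ t) :
    ‖g3F n t c‖ ≤ 104 / t := by
  have hs := sinpos hc
  have hs1 := Real.sin_le_one c
  have habs := dRabs (n := n) (t := t) hc hn hnt ht
  have ht0 : (0:ℝ) < t := by linarith
  have hD0 : (0:ℝ) < |dR n t c| := by linarith
  have hcos1 : |Real.cos c| ≤ 1 := Real.abs_cos_le_one c
  have hsin1 : |Real.sin c| ≤ 1 := by rw [abs_of_pos hs]; exact hs1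
  have h2 : (t / 2) ^ 2 ≤ |dR n t c| ^ 2 := by gcongr <;> positivity
  have h3 : (t / 2) ^ 3 ≤ |dR n t c| ^ 3 := by gcongr <;> positivity
  have h4 : (t / 2) ^ 4 ≤ |dR n t c| ^ 4 := by gcongr <;> positivity
  have e2 : ‖g3F n t c‖ = 2 * t *
      |(-(Real.cos c) / (dR n t c) ^ 2 + 12 * n * Real.sin c * Real.cos c / (dR n t c) ^ 3
        + 24 * n ^ 2 * (Real.cos c) ^ 3 / (dR n t c) ^ 4)| := by
    rw [show g3F n t c = (Complex.I * (2 * t : ℝ)) *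
        (((-(Real.cos c) / (dR n t c) ^ 2
          + 12 * n * Real.sin c * Real.cos c / (dR n t c) ^ 3
          + 24 * n ^ 2 * (Real.cos c) ^ 3 / (dR n t c) ^ 4) : ℝ) : ℂ) by
        rw [g3F]; push_cast; ring,
      norm_mul, norm_mul, nrm_I, nrm_real, nrm_real, one_mul, abs_of_pos (by linarith : (0:ℝ) < 2 * t)]
  rw [e2]
  have i1 : |(-(Real.cos c)) / (dR n t c) ^ 2| ≤ 4 / t ^ 2 := by
    rw [abs_div, abs_neg]
    calc |Real.cos c| / |(dR n t c) ^ 2| ≤ 1 / (t / 2) ^ 2 := by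
          rw [show |(dR n t c) ^ 2| = |dR n t c| ^ 2 from abs_pow _ 2]
          exact div_le_div₀ (by norm_num) hcos1 (by positivity) h2
      _ = 4 / t ^ 2 := by field_simp; ring
  have i2 : |12 * n * Real.sin c * Real.cos c / (dR n t c) ^ 3| ≤ 24 / t ^ 2 := by
    rw [abs_div]
    rw [show |(dR n t c) ^ 3| = |dR n t c| ^ 3 from abs_pow _ 3]
    calc |12 * n * Real.sin c * Real.cos c| / |dR n t c| ^ 3
        ≤ 12 * (t / 4) * 1 * 1 / (t / 2) ^ 3 := by
          refine div_le_div₀ (by positivity) ?_ (by positivity) h3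
          rw [abs_mul, abs_mul, abs_mul]
          have h12 : |(12:ℝ)| = 12 := by norm_num
          rw [h12, abs_of_nonneg hn]
          nlinarith [abs_nonneg (Real.sin c), abs_nonneg (Real.cos c),
            mul_nonneg (mul_nonneg (by norm_num : (0:ℝ) ≤ 12) hn) (abs_nonneg (Real.sin c)),
            mul_le_mul hsin1 hcos1 (abs_nonneg _) (by norm_num : (0:ℝ) ≤ 1)]
      _ = 24 / t ^ 2 := by field_simp; ring
  have i3 : |24 * n ^ 2 * (Real.cos c) ^ 3 / (dR n t c) ^ 4| ≤ 24 / t ^ 2 := by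
    rw [abs_div]
    rw [show |(dR n t c) ^ 4| = |dR n t c| ^ 4 from abs_pow _ 4]
    calc |24 * n ^ 2 * (Real.cos c) ^ 3| / |dR n t c| ^ 4
        ≤ 24 * (t / 4) ^ 2 * 1 / (t / 2) ^ 4 := by
          refine div_le_div₀ (by positivity) ?_ (by positivity) h4
          rw [abs_mul, abs_mul]
          have h24 : |(24:ℝ)| = 24 := by norm_num
          have hnn : |n ^ 2| = n ^ 2 := abs_of_nonneg (by positivity)
          have hc3 : |(Real.cos c) ^ 3| ≤ 1 := by
            rw [abs_pow]
            calc |Real.cos c| ^ 3 ≤ 1 ^ 3 := pow_le_pow_left₀ (abs_nonneg _) hcos1 3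
              _ = 1 := one_pow 3
          rw [h24, hnn]
          have hn2 : n ^ 2 ≤ (t / 4) ^ 2 := by nlinarith
          nlinarith [mul_nonneg (mul_nonneg (by norm_num : (0:ℝ) ≤ 24) (sq_nonneg n))
            (abs_nonneg ((Real.cos c) ^ 3)), sq_nonneg n]
      _ = 24 / t ^ 2 := by field_simp; ring
  have hb : |(-(Real.cos c) / (dR n t c) ^ 2 + 12 * n * Real.sin c * Real.cos c / (dR n t c) ^ 3
        + 24 * n ^ 2 * (Real.cos c) ^ 3 / (dR n t c) ^ 4)|
      ≤ 4 / t ^ 2 + 24 / t ^ 2 + 24 / t ^ 2 := by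
    refine (abs_add_le _ _).trans (add_le_add ((abs_add_le _ _).trans (add_le_add i1 i2)) i3)
  calc 2 * t * |(-(Real.cos c) / (dR n t c) ^ 2 + 12 * n * Real.sin c * Real.cos c / (dR n t c) ^ 3
        + 24 * n ^ 2 * (Real.cos c) ^ 3 / (dR n t c) ^ 4)|
      ≤ 2 * t * (4 / t ^ 2 + 24 / t ^ 2 + 24 / t ^ 2) :=
        mul_le_mul_of_nonneg_left hb (by positivity)
    _ = 104 / t := by field_simp; ring

end Gbounds
section Bbounds

variable {M : ℝ} {c : ℝ}

lemma nB1 (hc : c ∈ Ioo 0 π) (hα : α.re = -(1/2))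
    (hM : ∀ j : ℕ, j ≤ 3 → ∀ x, ‖deriv^[j] φ x‖ ≤ M) (hM0 : 0 ≤ M)
    (hn : 0 ≤ n) (hnt : 4 * n ≤ t) (ht : 1 ≤ t) :
    ‖B1F α n t φ c‖ ≤ 12 * (64 * (1 + ‖α‖) ^ 3 * M) * ((Real.sqrt (Real.sin c))⁻¹ / t) := by
  have hs := sinpos hc
  have ht0 : (0:ℝ) < t := by linarith
  have hsq : Real.sqrt (Real.sin c) ≠ 0 := (Real.sqrt_pos.mpr hs).ne'
  calc ‖B1F α n t φ c‖ ≤ ‖A1 α φ c * g0F n t c‖ + ‖A0 α φ c * g1F n t c‖ :=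
        norm_add_le _ _
    _ ≤ (64 * (1 + ‖α‖) ^ 3 * M * ((Real.sin c)⁻¹ ^ 1 * (Real.sqrt (Real.sin c))⁻¹))
          * (4 * Real.sin c / t)
        + (64 * (1 + ‖α‖) ^ 3 * M * ((Real.sin c)⁻¹ ^ 0 * (Real.sqrt (Real.sin c))⁻¹))
          * (8 / t) :=
        add_le_add (nmul (nA1 hc hα hM hM0) (ng0 hc hn hnt ht) (by positivity))
          (nmul (nA0 hc hα hM hM0) (ng1 hc hn hnt ht) (by positivity))
    _ = 12 * (64 * (1 + ‖α‖) ^ 3 * M) * ((Real.sqrt (Real.sin c))⁻¹ / t) := by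
        field_simp
        ring

lemma nB1d (hc : c ∈ Ioo 0 π) (hα : α.re = -(1/2))
    (hM : ∀ j : ℕ, j ≤ 3 → ∀ x, ‖deriv^[j] φ x‖ ≤ M) (hM0 : 0 ≤ M)
    (hn : 0 ≤ n) (hnt : 4 * n ≤ t) (ht : 1 ≤ t) :
    ‖B1dF α n t φ c‖ ≤ 44 * (64 * (1 + ‖α‖) ^ 3 * M)
      * ((Real.sin c)⁻¹ * (Real.sqrt (Real.sin c))⁻¹ / t) := by
  have hs := sinpos hc
  have hr := rge1 hc
  have ht0 : (0:ℝ) < t := by linarith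
  have hsq : Real.sqrt (Real.sin c) ≠ 0 := (Real.sqrt_pos.mpr hs).ne'
  have hKM : (0:ℝ) ≤ 64 * (1 + ‖α‖) ^ 3 * M := by positivity
  have h2n : ‖(2:ℂ)‖ = 2 := by norm_num
  calc ‖B1dF α n t φ c‖
      ≤ (‖A2 α φ c * g0F n t c‖ + ‖(2:ℂ) * (A1 α φ c * g1F n t c)‖)
        + ‖A0 α φ c * g2F n t c‖ := by
        rw [B1dF]
        exact (norm_add_le _ _).trans (add_le_add_left (norm_add_le _ _) _)
    _ ≤ ((64 * (1 + ‖α‖) ^ 3 * M * ((Real.sin c)⁻¹ ^ 2 * (Real.sqrt (Real.sin c))⁻¹))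
          * (4 * Real.sin c / t)
        + 2 * ((64 * (1 + ‖α‖) ^ 3 * M * ((Real.sin c)⁻¹ ^ 1 * (Real.sqrt (Real.sin c))⁻¹))
          * (8 / t)))
        + (64 * (1 + ‖α‖) ^ 3 * M * ((Real.sin c)⁻¹ ^ 0 * (Real.sqrt (Real.sin c))⁻¹))
          * (24 / t) := by
        refine add_le_add (add_le_add
          (nmul (nA2 hc hα hM hM0) (ng0 hc hn hnt ht) (by positivity)) ?_)
          (nmul (nA0 hc hα hM hM0) (ng2 hc hn hnt ht) (by positivity))
        rw [norm_mul, h2n]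
        exact mul_le_mul_of_nonneg_left
          (nmul (nA1 hc hα hM hM0) (ng1 hc hn hnt ht) (by positivity)) (by norm_num)
    _ ≤ (20 * (64 * (1 + ‖α‖) ^ 3 * M) * ((Real.sin c)⁻¹ * (Real.sqrt (Real.sin c))⁻¹ / t))
        + 24 * (64 * (1 + ‖α‖) ^ 3 * M) * ((Real.sin c)⁻¹ * (Real.sqrt (Real.sin c))⁻¹ / t) := by
        refine add_le_add (le_of_eq (by field_simp; ring)) ?_
        rw [pow_zero, one_mul]
        have hS : (0:ℝ) ≤ (Real.sqrt (Real.sin c))⁻¹ := by positivity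
        rw [show 64 * (1 + ‖α‖) ^ 3 * M * (Real.sqrt (Real.sin c))⁻¹ * (24 / t)
            = (24 * (64 * (1 + ‖α‖) ^ 3 * M * (Real.sqrt (Real.sin c))⁻¹)) / t by ring,
          show 24 * (64 * (1 + ‖α‖) ^ 3 * M) * ((Real.sin c)⁻¹ * (Real.sqrt (Real.sin c))⁻¹ / t)
            = (24 * (64 * (1 + ‖α‖) ^ 3 * M * ((Real.sin c)⁻¹ * (Real.sqrt (Real.sin c))⁻¹))) / t by ring]
        rw [div_le_div_iff₀ ht0 ht0]
        have key : 64 * (1 + ‖α‖) ^ 3 * M * (Real.sqrt (Real.sin c))⁻¹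
            ≤ 64 * (1 + ‖α‖) ^ 3 * M * ((Real.sin c)⁻¹ * (Real.sqrt (Real.sin c))⁻¹) := by
          nlinarith [mul_nonneg hKM hS, mul_nonneg (mul_nonneg hKM hS) (sub_nonneg.mpr hr)]
        nlinarith [ht0, mul_le_mul_of_nonneg_right key ht0.le]
    _ = 44 * (64 * (1 + ‖α‖) ^ 3 * M) * ((Real.sin c)⁻¹ * (Real.sqrt (Real.sin c))⁻¹ / t) := by
        ring

lemma upV {c : ℝ} (hc : c ∈ Ioo 0 π) {X T : ℝ} (hX : 0 ≤ X) (hT : 0 < T) {i j : ℕ}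
    (hij : i ≤ j) :
    X * ((Real.sin c)⁻¹ ^ i * (Real.sqrt (Real.sin c))⁻¹ / T)
      ≤ X * ((Real.sin c)⁻¹ ^ j * (Real.sqrt (Real.sin c))⁻¹ / T) := by
  have hr := rge1 hc
  have hS : (0:ℝ) ≤ (Real.sqrt (Real.sin c))⁻¹ := by positivity
  refine mul_le_mul_of_nonneg_left ?_ hX
  refine (div_le_div_iff_of_pos_right hT).mpr ?_
  exact mul_le_mul_of_nonneg_right (pow_le_pow_right₀ hr hij) hS

lemma nB1dd (hc : c ∈ Ioo 0 π) (hα : α.re = -(1/2))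
    (hM : ∀ j : ℕ, j ≤ 3 → ∀ x, ‖deriv^[j] φ x‖ ≤ M) (hM0 : 0 ≤ M)
    (hn : 0 ≤ n) (hnt : 4 * n ≤ t) (ht : 1 ≤ t) :
    ‖B1ddF α n t φ c‖ ≤ 204 * (64 * (1 + ‖α‖) ^ 3 * M)
      * ((Real.sin c)⁻¹ ^ 2 * (Real.sqrt (Real.sin c))⁻¹ / t) := by
  have hs := sinpos hc
  have ht0 : (0:ℝ) < t := by linarith
  have hsq : Real.sqrt (Real.sin c) ≠ 0 := (Real.sqrt_pos.mpr hs).ne'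
  have hKM : (0:ℝ) ≤ 64 * (1 + ‖α‖) ^ 3 * M := by positivity
  have h3n : ‖(3:ℂ)‖ = 3 := by norm_num
  have u1 : ‖A3 α φ c * g0F n t c‖ ≤ 4 * (64 * (1 + ‖α‖) ^ 3 * M)
      * ((Real.sin c)⁻¹ ^ 2 * (Real.sqrt (Real.sin c))⁻¹ / t) := by
    refine (nmul (nA3 hc hα hM hM0) (ng0 hc hn hnt ht) (by positivity)).trans
      (le_of_eq ?_)
    field_simp
  have u2 : ‖(3:ℂ) * (A2 α φ c * g1F n t c)‖ ≤ 24 * (64 * (1 + ‖α‖) ^ 3 * M)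
      * ((Real.sin c)⁻¹ ^ 2 * (Real.sqrt (Real.sin c))⁻¹ / t) := by
    rw [norm_mul, h3n]
    refine (mul_le_mul_of_nonneg_left
      (nmul (nA2 hc hα hM hM0) (ng1 hc hn hnt ht) (by positivity))
      (by norm_num : (0:ℝ) ≤ 3)).trans (le_of_eq ?_)
    ring
  have u3 : ‖(3:ℂ) * (A1 α φ c * g2F n t c)‖ ≤ 72 * (64 * (1 + ‖α‖) ^ 3 * M)
      * ((Real.sin c)⁻¹ ^ 2 * (Real.sqrt (Real.sin c))⁻¹ / t) := by
    rw [norm_mul, h3n]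
    refine (mul_le_mul_of_nonneg_left
      (nmul (nA1 hc hα hM hM0) (ng2 hc hn hnt ht) (by positivity))
      (by norm_num : (0:ℝ) ≤ 3)).trans ?_
    refine le_trans (le_of_eq (by ring)) (upV hc (X := 72 * (64 * (1 + ‖α‖) ^ 3 * M))
      (by positivity) ht0 (by norm_num : 1 ≤ 2))
  have u4 : ‖A0 α φ c * g3F n t c‖ ≤ 104 * (64 * (1 + ‖α‖) ^ 3 * M)
      * ((Real.sin c)⁻¹ ^ 2 * (Real.sqrt (Real.sin c))⁻¹ / t) := by
    refine (nmul (nA0 hc hα hM hM0) (ng3 hc hn hnt ht) (by positivity)).trans ?_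
    refine le_trans (le_of_eq (by ring)) (upV hc (X := 104 * (64 * (1 + ‖α‖) ^ 3 * M))
      (by positivity) ht0 (by norm_num : 0 ≤ 2))
  calc ‖B1ddF α n t φ c‖
      ≤ (‖A3 α φ c * g0F n t c‖ + ‖(3:ℂ) * (A2 α φ c * g1F n t c)‖
          + ‖(3:ℂ) * (A1 α φ c * g2F n t c)‖) + ‖A0 α φ c * g3F n t c‖ := by
        rw [B1ddF]
        refine (norm_add_le _ _).trans (add_le_add_left ?_ _)
        exact (norm_add_le _ _).trans (add_le_add_left (norm_add_le _ _) _)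
    _ ≤ _ := by
        have := add_le_add (add_le_add (add_le_add u1 u2) u3) u4
        refine this.trans (le_of_eq ?_)
        ring

lemma nB2 (hc : c ∈ Ioo 0 π) (hα : α.re = -(1/2))
    (hM : ∀ j : ℕ, j ≤ 3 → ∀ x, ‖deriv^[j] φ x‖ ≤ M) (hM0 : 0 ≤ M)
    (hn : 0 ≤ n) (hnt : 4 * n ≤ t) (ht : 1 ≤ t) :
    ‖B2F α n t φ c‖ ≤ 272 * (64 * (1 + ‖α‖) ^ 3 * M)
      * ((Real.sqrt (Real.sin c))⁻¹ / t ^ 2) := by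
  have hs := sinpos hc
  have ht0 : (0:ℝ) < t := by linarith
  have hsq : Real.sqrt (Real.sin c) ≠ 0 := (Real.sqrt_pos.mpr hs).ne'
  calc ‖B2F α n t φ c‖ ≤ ‖B1dF α n t φ c * g0F n t c‖ + ‖B1F α n t φ c * g1F n t c‖ :=
        norm_add_le _ _
    _ ≤ (44 * (64 * (1 + ‖α‖) ^ 3 * M) * ((Real.sin c)⁻¹ * (Real.sqrt (Real.sin c))⁻¹ / t))
          * (4 * Real.sin c / t)
        + (12 * (64 * (1 + ‖α‖) ^ 3 * M) * ((Real.sqrt (Real.sin c))⁻¹ / t)) * (8 / t) :=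
        add_le_add (nmul (nB1d hc hα hM hM0 hn hnt ht) (ng0 hc hn hnt ht) (by positivity))
          (nmul (nB1 hc hα hM hM0 hn hnt ht) (ng1 hc hn hnt ht) (by positivity))
    _ = 272 * (64 * (1 + ‖α‖) ^ 3 * M) * ((Real.sqrt (Real.sin c))⁻¹ / t ^ 2) := by
        field_simp
        ring

lemma nB2d (hc : c ∈ Ioo 0 π) (hα : α.re = -(1/2))
    (hM : ∀ j : ℕ, j ≤ 3 → ∀ x, ‖deriv^[j] φ x‖ ≤ M) (hM0 : 0 ≤ M)
    (hn : 0 ≤ n) (hnt : 4 * n ≤ t) (ht : 1 ≤ t) :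
    ‖B2dF α n t φ c‖ ≤ 1808 * (64 * (1 + ‖α‖) ^ 3 * M)
      * ((Real.sin c)⁻¹ ^ 1 * (Real.sqrt (Real.sin c))⁻¹ / t ^ 2) := by
  have hs := sinpos hc
  have ht0 : (0:ℝ) < t := by linarith
  have ht20 : (0:ℝ) < t ^ 2 := by positivity
  have hsq : Real.sqrt (Real.sin c) ≠ 0 := (Real.sqrt_pos.mpr hs).ne'
  have h2n : ‖(2:ℂ)‖ = 2 := by norm_num
  have u1 : ‖B1ddF α n t φ c * g0F n t c‖ ≤ 816 * (64 * (1 + ‖α‖) ^ 3 * M)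
      * ((Real.sin c)⁻¹ ^ 1 * (Real.sqrt (Real.sin c))⁻¹ / t ^ 2) := by
    refine (nmul (nB1dd hc hα hM hM0 hn hnt ht) (ng0 hc hn hnt ht) (by positivity)).trans
      (le_of_eq ?_)
    field_simp
    ring
  have u2 : ‖(2:ℂ) * (B1dF α n t φ c * g1F n t c)‖ ≤ 704 * (64 * (1 + ‖α‖) ^ 3 * M)
      * ((Real.sin c)⁻¹ ^ 1 * (Real.sqrt (Real.sin c))⁻¹ / t ^ 2) := by
    rw [norm_mul, h2n]
    refine (mul_le_mul_of_nonneg_left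
      (nmul (nB1d hc hα hM hM0 hn hnt ht) (ng1 hc hn hnt ht) (by positivity))
      (by norm_num : (0:ℝ) ≤ 2)).trans (le_of_eq ?_)
    field_simp
    ring
  have u3 : ‖B1F α n t φ c * g2F n t c‖ ≤ 288 * (64 * (1 + ‖α‖) ^ 3 * M)
      * ((Real.sin c)⁻¹ ^ 1 * (Real.sqrt (Real.sin c))⁻¹ / t ^ 2) := by
    refine (nmul (nB1 hc hα hM hM0 hn hnt ht) (ng2 hc hn hnt ht) (by positivity)).trans ?_
    refine le_trans (le_of_eq (by field_simp; ring)) (upV hc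
      (X := 288 * (64 * (1 + ‖α‖) ^ 3 * M)) (by positivity) ht20 (by norm_num : 0 ≤ 1))
  calc ‖B2dF α n t φ c‖
      ≤ (‖B1ddF α n t φ c * g0F n t c‖ + ‖(2:ℂ) * (B1dF α n t φ c * g1F n t c)‖)
        + ‖B1F α n t φ c * g2F n t c‖ := by
        rw [B2dF]
        exact (norm_add_le _ _).trans (add_le_add_left (norm_add_le _ _) _)
    _ ≤ _ := by
        have := add_le_add (add_le_add u1 u2) u3
        refine this.trans (le_of_eq ?_)
        ring

lemma nB3 (hc : c ∈ Ioo 0 π) (hα : α.re = -(1/2))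
    (hM : ∀ j : ℕ, j ≤ 3 → ∀ x, ‖deriv^[j] φ x‖ ≤ M) (hM0 : 0 ≤ M)
    (hn : 0 ≤ n) (hnt : 4 * n ≤ t) (ht : 1 ≤ t) :
    ‖B3F α n t φ c‖ ≤ 9408 * (64 * (1 + ‖α‖) ^ 3 * M)
      * ((Real.sqrt (Real.sin c))⁻¹ / t ^ 3) := by
  have hs := sinpos hc
  have ht0 : (0:ℝ) < t := by linarith
  have hsq : Real.sqrt (Real.sin c) ≠ 0 := (Real.sqrt_pos.mpr hs).ne'
  calc ‖B3F α n t φ c‖ ≤ ‖B2dF α n t φ c * g0F n t c‖ + ‖B2F α n t φ c * g1F n t c‖ :=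
        norm_add_le _ _
    _ ≤ (1808 * (64 * (1 + ‖α‖) ^ 3 * M)
          * ((Real.sin c)⁻¹ ^ 1 * (Real.sqrt (Real.sin c))⁻¹ / t ^ 2)) * (4 * Real.sin c / t)
        + (272 * (64 * (1 + ‖α‖) ^ 3 * M) * ((Real.sqrt (Real.sin c))⁻¹ / t ^ 2)) * (8 / t) :=
        add_le_add (nmul (nB2d hc hα hM hM0 hn hnt ht) (ng0 hc hn hnt ht) (by positivity))
          (nmul (nB2 hc hα hM hM0 hn hnt ht) (ng1 hc hn hnt ht) (by positivity))
    _ = 9408 * (64 * (1 + ‖α‖) ^ 3 * M) * ((Real.sqrt (Real.sin c))⁻¹ / t ^ 3) := by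
        field_simp
        ring

end Bbounds
section IntegrationInfra

lemma inv_sqrt_sin_le_aux {x : ℝ} (hx0 : 0 < x) (hx2 : x ≤ π / 2) :
    (Real.sqrt (Real.sin x))⁻¹ ≤ 2 * (Real.sqrt x)⁻¹ := by
  have hhalf : x / 2 ≤ Real.sin x := by
    have h := Real.mul_le_sin hx0.le hx2
    rw [show 2 / π * x = 2 * x / π from by ring] at h
    have h' : x / 2 ≤ 2 * x / π := by
      rw [div_le_div_iff₀ (by norm_num) Real.pi_pos]
      nlinarith [Real.pi_le_four]
    linarith
  have hsin0 : 0 < Real.sin x := by linarith [hx0]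
  have h1 : Real.sqrt (x / 2) ≤ Real.sqrt (Real.sin x) := Real.sqrt_le_sqrt hhalf
  have hsx2 : 0 < Real.sqrt (x / 2) := Real.sqrt_pos.mpr (by linarith)
  have hsx : 0 < Real.sqrt x := Real.sqrt_pos.mpr hx0
  have hss : 0 < Real.sqrt (Real.sin x) := Real.sqrt_pos.mpr hsin0
  have h2 : (Real.sqrt (Real.sin x))⁻¹ ≤ (Real.sqrt (x / 2))⁻¹ := by
    exact inv_anti₀ hsx2 h1
  refine h2.trans ?_
  rw [inv_le_iff_one_le_mul₀ hsx2]
  rw [show 2 * (Real.sqrt x)⁻¹ * Real.sqrt (x / 2) = 2 * Real.sqrt (x / 2) / Real.sqrt x by ring]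
  rw [le_div_iff₀ hsx, one_mul]
  have this2 : Real.sqrt (2 * x) = 2 * Real.sqrt (x / 2) := by
    rw [show (2:ℝ) * x = 2 ^ 2 * (x / 2) by ring,
      Real.sqrt_mul (by positivity : (0:ℝ) ≤ 2 ^ 2),
      Real.sqrt_sq (by norm_num : (0:ℝ) ≤ 2)]
  rw [← this2]
  exact Real.sqrt_le_sqrt (by linarith)

lemma inv_sqrt_sin_le {c : ℝ} (hc : c ∈ Ioo 0 π) :
    (Real.sqrt (Real.sin c))⁻¹ ≤ 2 * ((Real.sqrt c)⁻¹ + (Real.sqrt (π - c))⁻¹) := by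
  have h1 : (0:ℝ) ≤ (Real.sqrt c)⁻¹ := by positivity
  have h2 : (0:ℝ) ≤ (Real.sqrt (π - c))⁻¹ := by positivity
  rcases le_or_gt c (π / 2) with hle | hgt
  · refine (inv_sqrt_sin_le_aux hc.1 hle).trans ?_
    linarith
  · have hπc : Real.sin c = Real.sin (π - c) := (Real.sin_pi_sub c).symm
    rw [hπc]
    refine (inv_sqrt_sin_le_aux (by linarith [hc.2]) (by linarith)).trans ?_
    linarith

def baseF (c : ℝ) : ℝ := (Real.sqrt c)⁻¹ + (Real.sqrt (π - c))⁻¹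

lemma baseF_int : IntervalIntegrable baseF volume 0 π := by
  have h1 : IntervalIntegrable (fun c : ℝ => (Real.sqrt c)⁻¹) volume 0 π := by
    have h := intervalIntegral.intervalIntegrable_rpow' (a := 0) (b := π)
      (r := -(1/2)) (by norm_num)
    refine h.congr_ae ?_
    rw [uIoc_of_le Real.pi_pos.le]
    refine (ae_restrict_iff' measurableSet_Ioc).mpr (ae_of_all _ fun x hx => ?_)
    show x ^ (-(1/2) : ℝ) = (Real.sqrt x)⁻¹
    rw [Real.sqrt_eq_rpow, ← Real.rpow_neg (le_of_lt hx.1)]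
  have h2 : IntervalIntegrable (fun c : ℝ => (Real.sqrt (π - c))⁻¹) volume 0 π := by
    have := (h1.comp_sub_left π).symm
    simpa using this
  exact h1.add h2

lemma baseF_nonneg (c : ℝ) : 0 ≤ baseF c := by
  rw [baseF]; positivity

lemma integrable_of_dom {f : ℝ → ℂ} (hcont : ContinuousOn f (Ioo 0 π)) {Mb : ℝ}
    (hMb : 0 ≤ Mb)
    (hb : ∀ c ∈ Ioo 0 π, ‖f c‖ ≤ Mb * (Real.sqrt (Real.sin c))⁻¹) :
    IntervalIntegrable f volume 0 π := by
  rw [intervalIntegrable_iff, uIoc_of_le Real.pi_pos.le]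
  have hbase : IntegrableOn (fun c => (2 * Mb) * baseF c) (Ioo 0 π) volume := by
    have hI := baseF_int.const_mul (2 * Mb)
    rw [intervalIntegrable_iff, uIoc_of_le Real.pi_pos.le] at hI
    exact hI.mono_set Ioo_subset_Ioc_self
  have hIoo : IntegrableOn f (Ioo 0 π) volume := by
    refine Integrable.mono' hbase (hcont.aestronglyMeasurable measurableSet_Ioo) ?_
    refine (ae_restrict_iff' measurableSet_Ioo).mpr (ae_of_all _ fun c hcc => ?_)
    refine (hb c hcc).trans ?_
    calc Mb * (Real.sqrt (Real.sin c))⁻¹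
        ≤ Mb * (2 * ((Real.sqrt c)⁻¹ + (Real.sqrt (π - c))⁻¹)) :=
          mul_le_mul_of_nonneg_left (inv_sqrt_sin_le hcc) hMb
      _ = 2 * Mb * baseF c := by rw [baseF]; ring
  exact hIoo.congr_set_ae Ioo_ae_eq_Ioc.symm

lemma norm_int_le {f : ℝ → ℂ} (hcont : ContinuousOn f (Ioo 0 π)) {Mb : ℝ}
    (hMb : 0 ≤ Mb)
    (hb : ∀ c ∈ Ioo 0 π, ‖f c‖ ≤ Mb * (Real.sqrt (Real.sin c))⁻¹) :
    ‖∫ c in (0:ℝ)..π, f c‖ ≤ 2 * Mb * ∫ c in (0:ℝ)..π, baseF c := by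
  have hπ : ∀ᵐ x : ℝ ∂(volume.restrict (Set.uIoc (0:ℝ) π)), x ≠ π := by
    refine ae_restrict_of_ae ?_
    refine ae_iff.mpr ?_
    simp only [ne_eq, not_not]
    rw [show {a : ℝ | a = π} = {π} from rfl]
    exact Real.volume_singleton
  have hbnd := baseF_int.const_mul (2 * Mb)
  have hae : ∀ᵐ x ∂(volume.restrict (Set.uIoc (0:ℝ) π)), ‖f x‖ ≤ (2 * Mb) * baseF x := by
    filter_upwards [hπ, ae_restrict_mem measurableSet_uIoc] with x hx hxI
    have hxo : x ∈ Ioo 0 π := by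
      rw [uIoc_of_le Real.pi_pos.le] at hxI
      exact ⟨hxI.1, lt_of_le_of_ne hxI.2 hx⟩
    refine (hb x hxo).trans ?_
    calc Mb * (Real.sqrt (Real.sin x))⁻¹
        ≤ Mb * (2 * ((Real.sqrt x)⁻¹ + (Real.sqrt (π - x))⁻¹)) :=
          mul_le_mul_of_nonneg_left (inv_sqrt_sin_le hxo) hMb
      _ = 2 * Mb * baseF x := by rw [baseF]; ring
  have h := intervalIntegral.norm_integral_le_abs_of_norm_le hae hbnd
  refine h.trans (le_of_eq ?_)
  rw [intervalIntegral.integral_const_mul, abs_of_nonneg]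
  exact mul_nonneg (by linarith) (intervalIntegral.integral_nonneg Real.pi_pos.le
    (fun x _ => baseF_nonneg x))

lemma tend0 {F : ℝ → ℂ} {Cb : ℝ}
    (hb : ∀ c ∈ Ioo 0 π, ‖F c‖ ≤ Cb * Real.sqrt (Real.sin c)) :
    Tendsto F (𝓝[>] (0:ℝ)) (𝓝 0) ∧ Tendsto F (𝓝[<] π) (𝓝 0) := by
  have hg : Continuous fun c => Cb * Real.sqrt (Real.sin c) :=
    continuous_const.mul (Real.continuous_sqrt.comp Real.continuous_sin)
  constructor
  · rw [tendsto_zero_iff_norm_tendsto_zero]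
    refine squeeze_zero'
      (eventually_of_mem (Ioo_mem_nhdsGT_of_mem ⟨le_refl (0:ℝ), Real.pi_pos⟩)
        fun c _ => norm_nonneg _)
      (eventually_of_mem (Ioo_mem_nhdsGT_of_mem ⟨le_refl (0:ℝ), Real.pi_pos⟩) hb) ?_
    have h0 : Cb * Real.sqrt (Real.sin 0) = 0 := by simp
    have := hg.tendsto 0
    rw [h0] at this
    exact this.mono_left nhdsWithin_le_nhds
  · rw [tendsto_zero_iff_norm_tendsto_zero]
    refine squeeze_zero'
      (eventually_of_mem (Ioo_mem_nhdsLT_of_mem ⟨Real.pi_pos, le_refl π⟩)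
        fun c _ => norm_nonneg _)
      (eventually_of_mem (Ioo_mem_nhdsLT_of_mem ⟨Real.pi_pos, le_refl π⟩) hb) ?_
    have h0 : Cb * Real.sqrt (Real.sin π) = 0 := by simp
    have := hg.tendsto π
    rw [h0] at this
    exact this.mono_left nhdsWithin_le_nhds

end IntegrationInfra
section Continuity

lemma contQ : ContinuousOn Q (Ioo 0 π) := by
  apply Complex.continuous_ofReal.comp_continuousOn
  exact Real.continuous_cos.continuousOn.div Real.continuous_sin.continuousOn
    (fun c hc => (sinpos hc).ne')

lemma contE0 : ContinuousOn (E0 α) (Ioo 0 π) := by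
  unfold E0
  apply Complex.continuous_exp.comp_continuousOn
  refine continuousOn_const.mul ?_
  apply Complex.continuous_ofReal.comp_continuousOn
  exact Real.continuous_sin.continuousOn.log (fun c hc => (sinpos hc).ne')

lemma contE1 : ContinuousOn (E1 α) (Ioo 0 π) := by
  unfold E1
  exact (continuousOn_const.mul contQ).mul contE0

lemma contE2 : ContinuousOn (E2 α) (Ioo 0 π) := by
  unfold E2
  exact ((continuousOn_const.mul ((continuousOn_const.add (contQ.pow 2)).neg)).add
    (continuousOn_const.mul (contQ.pow 2))).mul contE0

lemma contE3 : ContinuousOn (E3 α) (Ioo 0 π) := by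
  unfold E3
  exact (((continuousOn_const.mul contQ).mul
    ((continuousOn_const.add (contQ.pow 2)).neg)).add
    (continuousOn_const.mul (contQ.pow 3))).mul contE0

variable {φ : ℝ → ℂ}

lemma contDphi (hφ : ContDiff ℝ (⊤ : ℕ∞) φ) (j : ℕ) : Continuous (deriv^[j] φ) :=
  (hφ.iterate_deriv j).continuous

lemma contA0 (hφ : ContDiff ℝ (⊤ : ℕ∞) φ) : ContinuousOn (A0 α φ) (Ioo 0 π) := by
  unfold A0
  exact contE0.mul (by simpa using (contDphi hφ 0).continuousOn)

lemma contA1 (hφ : ContDiff ℝ (⊤ : ℕ∞) φ) : ContinuousOn (A1 α φ) (Ioo 0 π) := by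
  unfold A1
  exact (contE1.mul (by simpa using (contDphi hφ 0).continuousOn)).add
    (contE0.mul (contDphi hφ 1).continuousOn)

lemma contA2 (hφ : ContDiff ℝ (⊤ : ℕ∞) φ) : ContinuousOn (A2 α φ) (Ioo 0 π) := by
  unfold A2
  exact ((contE2.mul (by simpa using (contDphi hφ 0).continuousOn)).add
    (continuousOn_const.mul (contE1.mul (contDphi hφ 1).continuousOn))).add
    (contE0.mul (contDphi hφ 2).continuousOn)

lemma contA3 (hφ : ContDiff ℝ (⊤ : ℕ∞) φ) : ContinuousOn (A3 α φ) (Ioo 0 π) := by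
  unfold A3
  exact (((contE3.mul (by simpa using (contDphi hφ 0).continuousOn)).add
    (continuousOn_const.mul (contE2.mul (contDphi hφ 1).continuousOn))).add
    (continuousOn_const.mul (contE1.mul (contDphi hφ 2).continuousOn))).add
    (contE0.mul (contDphi hφ 3).continuousOn)

lemma contdRC (n t : ℝ) : Continuous (fun c => ((dR n t c : ℝ) : ℂ)) := by
  apply Complex.continuous_ofReal.comp
  unfold dR
  exact (continuous_const.mul Real.continuous_sin).sub continuous_const

lemma contg0 (hn : 0 ≤ n) (hnt : ∀ c ∈ Ioo 0 π, dR n t c ≠ 0) :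
    ContinuousOn (g0F n t) (Ioo 0 π) := by
  unfold g0F
  exact (continuousOn_const.mul
    (Complex.continuous_ofReal.comp Real.continuous_sin).continuousOn).div
    (contdRC n t).continuousOn (fun c hc => hdne (hnt c hc))

lemma contg1 (hnt : ∀ c ∈ Ioo 0 π, dR n t c ≠ 0) :
    ContinuousOn (g1F n t) (Ioo 0 π) := by
  unfold g1F
  exact (continuousOn_const.mul
    (Complex.continuous_ofReal.comp Real.continuous_cos).continuousOn).div
    ((contdRC n t).continuousOn.pow 2) (fun c hc => pow_ne_zero 2 (hdne (hnt c hc)))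

lemma contg2 (hnt : ∀ c ∈ Ioo 0 π, dR n t c ≠ 0) :
    ContinuousOn (g2F n t) (Ioo 0 π) := by
  unfold g2F
  refine continuousOn_const.mul (ContinuousOn.sub ?_ ?_)
  · exact ((Complex.continuous_ofReal.comp Real.continuous_sin).continuousOn.neg).div
      ((contdRC n t).continuousOn.pow 2) (fun c hc => pow_ne_zero 2 (hdne (hnt c hc)))
  · exact (continuousOn_const.mul
      ((Complex.continuous_ofReal.comp Real.continuous_cos).continuousOn.pow 2)).div
      ((contdRC n t).continuousOn.pow 3) (fun c hc => pow_ne_zero 3 (hdne (hnt c hc)))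

lemma contg3 (hnt : ∀ c ∈ Ioo 0 π, dR n t c ≠ 0) :
    ContinuousOn (g3F n t) (Ioo 0 π) := by
  unfold g3F
  refine continuousOn_const.mul ((ContinuousOn.add (ContinuousOn.add ?_ ?_) ?_))
  · exact ((Complex.continuous_ofReal.comp Real.continuous_cos).continuousOn.neg).div
      ((contdRC n t).continuousOn.pow 2) (fun c hc => pow_ne_zero 2 (hdne (hnt c hc)))
  · exact ((continuousOn_const.mul
      (Complex.continuous_ofReal.comp Real.continuous_sin).continuousOn).mul
      (Complex.continuous_ofReal.comp Real.continuous_cos).continuousOn).div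
      ((contdRC n t).continuousOn.pow 3) (fun c hc => pow_ne_zero 3 (hdne (hnt c hc)))
  · exact (continuousOn_const.mul
      ((Complex.continuous_ofReal.comp Real.continuous_cos).continuousOn.pow 3)).div
      ((contdRC n t).continuousOn.pow 4) (fun c hc => pow_ne_zero 4 (hdne (hnt c hc)))

lemma contW (n t : ℝ) : ContinuousOn (wF n t) (Ioo 0 π) := by
  unfold wF
  apply Complex.continuous_exp.comp_continuousOn
  refine continuousOn_const.mul ?_
  apply Complex.continuous_ofReal.comp_continuousOn
  unfold psF
  refine ContinuousOn.add (ContinuousOn.sub ?_ ?_) ?_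
  · exact (continuous_const.mul continuous_id).continuousOn
  · refine continuousOn_const.mul ?_
    refine ContinuousOn.log ?_ ?_
    · exact (Real.continuous_sin.comp (continuous_id.div_const 2)).continuousOn
    · exact fun c hc => (half_mem hc).1.ne'
  · refine continuousOn_const.mul ?_
    refine ContinuousOn.log ?_ ?_
    · exact (Real.continuous_cos.comp (continuous_id.div_const 2)).continuousOn
    · exact fun c hc => (half_mem hc).2.ne'

lemma contB1 (hφ : ContDiff ℝ (⊤ : ℕ∞) φ) (hn : 0 ≤ n)
    (hnt : ∀ c ∈ Ioo 0 π, dR n t c ≠ 0) : ContinuousOn (B1F α n t φ) (Ioo 0 π) := by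
  unfold B1F
  exact ((contA1 hφ).mul (contg0 hn hnt)).add ((contA0 hφ).mul (contg1 hnt))

lemma contB1d (hφ : ContDiff ℝ (⊤ : ℕ∞) φ) (hn : 0 ≤ n)
    (hnt : ∀ c ∈ Ioo 0 π, dR n t c ≠ 0) : ContinuousOn (B1dF α n t φ) (Ioo 0 π) := by
  unfold B1dF
  exact (((contA2 hφ).mul (contg0 hn hnt)).add
    (continuousOn_const.mul ((contA1 hφ).mul (contg1 hnt)))).add
    ((contA0 hφ).mul (contg2 hnt))

lemma contB1dd (hφ : ContDiff ℝ (⊤ : ℕ∞) φ) (hn : 0 ≤ n)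
    (hnt : ∀ c ∈ Ioo 0 π, dR n t c ≠ 0) : ContinuousOn (B1ddF α n t φ) (Ioo 0 π) := by
  unfold B1ddF
  exact ((((contA3 hφ).mul (contg0 hn hnt)).add
    (continuousOn_const.mul ((contA2 hφ).mul (contg1 hnt)))).add
    (continuousOn_const.mul ((contA1 hφ).mul (contg2 hnt)))).add
    ((contA0 hφ).mul (contg3 hnt))

lemma contB2 (hφ : ContDiff ℝ (⊤ : ℕ∞) φ) (hn : 0 ≤ n)
    (hnt : ∀ c ∈ Ioo 0 π, dR n t c ≠ 0) : ContinuousOn (B2F α n t φ) (Ioo 0 π) := by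
  unfold B2F
  exact ((contB1d hφ hn hnt).mul (contg0 hn hnt)).add ((contB1 hφ hn hnt).mul (contg1 hnt))

lemma contB2d (hφ : ContDiff ℝ (⊤ : ℕ∞) φ) (hn : 0 ≤ n)
    (hnt : ∀ c ∈ Ioo 0 π, dR n t c ≠ 0) : ContinuousOn (B2dF α n t φ) (Ioo 0 π) := by
  unfold B2dF
  exact (((contB1dd hφ hn hnt).mul (contg0 hn hnt)).add
    (continuousOn_const.mul ((contB1d hφ hn hnt).mul (contg1 hnt)))).add
    ((contB1 hφ hn hnt).mul (contg2 hnt))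

lemma contB3 (hφ : ContDiff ℝ (⊤ : ℕ∞) φ) (hn : 0 ≤ n)
    (hnt : ∀ c ∈ Ioo 0 π, dR n t c ≠ 0) : ContinuousOn (B3F α n t φ) (Ioo 0 π) := by
  unfold B3F
  exact ((contB2d hφ hn hnt).mul (contg0 hn hnt)).add ((contB2 hφ hn hnt).mul (contg1 hnt))

end Continuity
section Main

lemma periodic_deriv {f : ℝ → ℂ} (hf : ∀ x, f (x + π) = f x) (x : ℝ) :
    deriv f (x + π) = deriv f x := by
  have h2 : (fun y => f (y + π)) = f := funext hf
  calc deriv f (x + π) = deriv (fun y => f (y + π)) x := (deriv_comp_add_const f π x).symm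
    _ = deriv f x := by rw [h2]

lemma periodic_iter {f : ℝ → ℂ} (hf : ∀ x, f (x + π) = f x) (j : ℕ) :
    ∀ x, deriv^[j] f (x + π) = deriv^[j] f x := by
  induction j with
  | zero => simpa using hf
  | succ k ih =>
      intro x
      rw [Function.iterate_succ_apply']
      exact periodic_deriv ih x

lemma bound_exists {f : ℝ → ℂ} (hc : Continuous f) (hp : ∀ x, f (x + π) = f x) :
    BddAbove (Set.range fun x => ‖f x‖) := by
  obtain ⟨b, hb⟩ := (isCompact_Icc (a := (0:ℝ)) (b := π)).exists_bound_of_continuousOn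
    hc.continuousOn
  refine ⟨b, ?_⟩
  rintro y ⟨x, rfl⟩
  have hper : Function.Periodic f π := hp
  obtain ⟨z, hz, hfz⟩ := hper.exists_mem_Ico₀ Real.pi_pos x
  show ‖f x‖ ≤ b
  rw [hfz]
  exact hb z ⟨hz.1, hz.2.le⟩

lemma kfun_eq {τ τ' : ℂ} {t : ℝ} {nz : ℤ} {φ : ℝ → ℂ} {x : ℝ} (hxo : x ∈ Ioo 0 π) :
    kfun τ τ' (Complex.I * (t : ℂ)) x * Complex.exp (Complex.I * (nz : ℂ) * (x : ℂ)) * φ x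
      = A0 ((-τ - τ' - 1) / 2) φ x * wF ((nz : ℤ) : ℝ) t x := by
  obtain ⟨hs2, hc2⟩ := half_mem hxo
  have hs := sinpos hxo
  rw [kfun, pw, pw, pw, A0, E0, wF, psF]
  rw [abs_of_pos hs, abs_of_pos hs2, abs_of_pos hc2]
  rw [show Complex.exp ((-τ - τ' - 1) / 2 * (Real.log (Real.sin x) : ℂ)) * φ x
      * Complex.exp (Complex.I *
        ((((nz : ℝ) * x - t / 2 * Real.log (Real.sin (x / 2))
          + t / 2 * Real.log (Real.cos (x / 2))) : ℝ) : ℂ))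
      = Complex.exp ((-τ - τ' - 1) / 2 * (Real.log (Real.sin x) : ℂ)
          + Complex.I * ((((nz : ℝ) * x - t / 2 * Real.log (Real.sin (x / 2))
          + t / 2 * Real.log (Real.cos (x / 2))) : ℝ) : ℂ)) * φ x from by
    rw [Complex.exp_add]; ring]
  rw [← Complex.exp_add, ← Complex.exp_add, ← Complex.exp_add]
  congr 1
  push_cast
  ring

end Main
end St12

open St12 in
/-- For `t ≥ 𝒮 = 2(|τ|+|τ'|)+1` and `t ≥ 4n`: `|G_{it,n}(φ)| ≤ C ‖φ‖_{C³} t^{-3}`. -/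
theorem stmt_12 (τ τ' : ℂ) (hτ : τ.re = 0) (hτ' : τ'.re = 0) :
    ∃ C : ℝ, 0 < C ∧
      ∀ n : ℤ, 0 ≤ n → Even n →
        ∀ t : ℝ, 2 * (‖τ‖ + ‖τ'‖) + 1 ≤ t → 4 * (n : ℝ) ≤ t →
          ∀ φ : ℝ → ℂ, ContDiff ℝ (⊤ : ℕ∞) φ → (∀ x : ℝ, φ (x + π) = φ x) →
            ‖Gfun τ τ' (Complex.I * (t : ℂ)) n φ‖ ≤ C * Cnorm 3 φ * t ^ (-3 : ℝ) := by
  set α : ℂ := (-τ - τ' - 1) / 2 with hαdef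
  have hα : α.re = -(1/2) := by
    rw [hαdef, show (2:ℂ) = ((2:ℝ):ℂ) by norm_num, Complex.div_ofReal_re]
    simp [hτ, hτ']
    norm_num
  set Cint : ℝ := ∫ c in (0:ℝ)..π, baseF c with hCintdef
  have hCint : 0 ≤ Cint :=
    intervalIntegral.integral_nonneg Real.pi_pos.le (fun x _ => baseF_nonneg x)
  refine ⟨37632 * (64 * (1 + ‖α‖) ^ 3) * (Cint + 1),
    mul_pos (by positivity) (by linarith), ?_⟩
  intro n hn0 _hneven t hts htn φ hφ hper
  have ht1 : 1 ≤ t := by nlinarith [norm_nonneg τ, norm_nonneg τ']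
  have ht0 : (0:ℝ) < t := by linarith
  have hnR : (0:ℝ) ≤ ((n:ℤ):ℝ) := by exact_mod_cast hn0
  have hntR : 4 * ((n:ℤ):ℝ) ≤ t := htn
  have hdne' : ∀ c ∈ Set.Ioo 0 π, dR ((n:ℤ):ℝ) t c ≠ 0 :=
    fun c hc => dRne hc hnR hntR ht1
  -- Cnorm facts
  set M : ℝ := Cnorm 3 φ with hMdef
  have hbddx : ∀ m : Fin 4, BddAbove (Set.range fun x => ‖iteratedDeriv (m:ℕ) φ x‖) := by
    intro m
    rw [iteratedDeriv_eq_iterate]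
    exact bound_exists (contDphi hφ m) (periodic_iter hper m)
  have hM : ∀ j : ℕ, j ≤ 3 → ∀ x, ‖deriv^[j] φ x‖ ≤ M := by
    intro j hj x
    have h1 : ‖iteratedDeriv ((⟨j, by omega⟩ : Fin 4) : ℕ) φ x‖
        ≤ ⨆ y, ‖iteratedDeriv ((⟨j, by omega⟩ : Fin 4) : ℕ) φ y‖ :=
      le_ciSup (hbddx ⟨j, by omega⟩) x
    have h2 : (⨆ y, ‖iteratedDeriv ((⟨j, by omega⟩ : Fin 4) : ℕ) φ y‖) ≤ M := by
      rw [hMdef, Cnorm]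
      exact le_ciSup (f := fun m : Fin 4 => ⨆ y, ‖iteratedDeriv (m:ℕ) φ y‖)
        (Set.Finite.bddAbove (Set.finite_range _)) ⟨j, by omega⟩
    calc ‖deriv^[j] φ x‖ = ‖iteratedDeriv j φ x‖ := by rw [iteratedDeriv_eq_iterate]
      _ ≤ M := le_trans h1 h2
  have hM0 : 0 ≤ M := le_trans (norm_nonneg (φ 0)) (by simpa using hM 0 (by norm_num) 0)
  have hKM0 : (0:ℝ) ≤ 64 * (1 + ‖α‖) ^ 3 * M :=
    mul_nonneg (by positivity) hM0
  -- rewrite Gfun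
  have hGeq : Gfun τ τ' (Complex.I * (t:ℂ)) n φ
      = 2 * ∫ c in (0:ℝ)..π, A0 α φ c * wF ((n:ℤ):ℝ) t c := by
    rw [Gfun]
    congr 1
    apply intervalIntegral.integral_congr_ae
    have hπ0 : ∀ᵐ x : ℝ ∂volume, x ≠ π := by
      refine ae_iff.mpr ?_
      simp only [ne_eq, not_not]
      rw [show {a : ℝ | a = π} = {π} from rfl]
      exact Real.volume_singleton
    filter_upwards [hπ0] with x hx hxI
    have hxo : x ∈ Set.Ioo 0 π := by
      rw [Set.uIoc_of_le Real.pi_pos.le] at hxI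
      exact ⟨hxI.1, lt_of_le_of_ne hxI.2 hx⟩
    exact kfun_eq hxo
  -- integrability of each B_k * w
  have hb0 : ∀ c ∈ Set.Ioo 0 π, ‖A0 α φ c * wF ((n:ℤ):ℝ) t c‖
      ≤ (64 * (1 + ‖α‖) ^ 3 * M) * (Real.sqrt (Real.sin c))⁻¹ := by
    intro c hc
    rw [norm_mul, norm_wF, mul_one]
    have h := nA0 hc hα hM hM0
    rwa [pow_zero, one_mul] at h
  have hb1 : ∀ c ∈ Set.Ioo 0 π, ‖B1F α ((n:ℤ):ℝ) t φ c * wF ((n:ℤ):ℝ) t c‖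
      ≤ (12 * (64 * (1 + ‖α‖) ^ 3 * M) / t) * (Real.sqrt (Real.sin c))⁻¹ := by
    intro c hc
    rw [norm_mul, norm_wF, mul_one]
    refine (nB1 hc hα hM hM0 hnR hntR ht1).trans (le_of_eq (by ring))
  have hb2 : ∀ c ∈ Set.Ioo 0 π, ‖B2F α ((n:ℤ):ℝ) t φ c * wF ((n:ℤ):ℝ) t c‖
      ≤ (272 * (64 * (1 + ‖α‖) ^ 3 * M) / t ^ 2) * (Real.sqrt (Real.sin c))⁻¹ := by
    intro c hc
    rw [norm_mul, norm_wF, mul_one]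
    refine (nB2 hc hα hM hM0 hnR hntR ht1).trans (le_of_eq (by ring))
  have hb3 : ∀ c ∈ Set.Ioo 0 π, ‖B3F α ((n:ℤ):ℝ) t φ c * wF ((n:ℤ):ℝ) t c‖
      ≤ (9408 * (64 * (1 + ‖α‖) ^ 3 * M) / t ^ 3) * (Real.sqrt (Real.sin c))⁻¹ := by
    intro c hc
    rw [norm_mul, norm_wF, mul_one]
    refine (nB3 hc hα hM hM0 hnR hntR ht1).trans (le_of_eq (by ring))
  have int0 : IntervalIntegrable (fun c => A0 α φ c * wF ((n:ℤ):ℝ) t c) volume 0 π :=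
    integrable_of_dom ((contA0 hφ).mul (contW _ _)) hKM0 hb0
  have int1 : IntervalIntegrable (fun c => B1F α ((n:ℤ):ℝ) t φ c * wF ((n:ℤ):ℝ) t c)
      volume 0 π :=
    integrable_of_dom ((contB1 hφ hnR hdne').mul (contW _ _))
      (by positivity) hb1
  have int2 : IntervalIntegrable (fun c => B2F α ((n:ℤ):ℝ) t φ c * wF ((n:ℤ):ℝ) t c)
      volume 0 π :=
    integrable_of_dom ((contB2 hφ hnR hdne').mul (contW _ _))
      (by positivity) hb2
  have int3 : IntervalIntegrable (fun c => B3F α ((n:ℤ):ℝ) t φ c * wF ((n:ℤ):ℝ) t c)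
      volume 0 π :=
    integrable_of_dom ((contB3 hφ hnR hdne').mul (contW _ _))
      (by positivity) hb3
  -- boundary bound helper
  have hSs : ∀ c ∈ Set.Ioo 0 π,
      (Real.sqrt (Real.sin c))⁻¹ * Real.sin c = Real.sqrt (Real.sin c) := by
    intro c hc
    have hs := sinpos hc
    have hsq : Real.sqrt (Real.sin c) ≠ 0 := (Real.sqrt_pos.mpr hs).ne'
    rw [show Real.sin c = Real.sqrt (Real.sin c) * Real.sqrt (Real.sin c) from
      (Real.mul_self_sqrt hs.le).symm]
    field_simp
    rw [Real.sqrt_sq (Real.sqrt_nonneg _)]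
  have bdry : ∀ (B : ℝ → ℂ) (Cb : ℝ), 0 ≤ Cb →
      (∀ c ∈ Set.Ioo 0 π, ‖B c‖ ≤ Cb * (Real.sqrt (Real.sin c))⁻¹) →
      ∀ c ∈ Set.Ioo 0 π, ‖B c * g0F ((n:ℤ):ℝ) t c * wF ((n:ℤ):ℝ) t c‖
        ≤ (4 * Cb) * Real.sqrt (Real.sin c) := by
    intro B Cb hCb hB c hc
    have hs := sinpos hc
    rw [norm_mul, norm_wF, mul_one, norm_mul]
    calc ‖B c‖ * ‖g0F ((n:ℤ):ℝ) t c‖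
        ≤ (Cb * (Real.sqrt (Real.sin c))⁻¹) * (4 * Real.sin c / t) :=
          mul_le_mul (hB c hc) (ng0 hc hnR hntR ht1) (norm_nonneg _) (by positivity)
      _ = (4 * Cb / t) * ((Real.sqrt (Real.sin c))⁻¹ * Real.sin c) := by ring
      _ = (4 * Cb / t) * Real.sqrt (Real.sin c) := by rw [hSs c hc]
      _ ≤ (4 * Cb) * Real.sqrt (Real.sin c) := by
          refine mul_le_mul_of_nonneg_right ?_ (Real.sqrt_nonneg _)
          refine div_le_self (by positivity) ht1
  -- IBP step k = 0
  have step0 : (∫ c in (0:ℝ)..π, A0 α φ c * wF ((n:ℤ):ℝ) t c)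
      = -∫ c in (0:ℝ)..π, B1F α ((n:ℤ):ℝ) t φ c * wF ((n:ℤ):ℝ) t c := by
    have hbB : ∀ c ∈ Set.Ioo 0 π, ‖A0 α φ c‖
        ≤ (64 * (1 + ‖α‖) ^ 3 * M) * (Real.sqrt (Real.sin c))⁻¹ := by
      intro c hc
      have h := nA0 hc hα hM hM0
      rwa [pow_zero, one_mul] at h
    obtain ⟨hT0, hTπ⟩ := tend0 (bdry (A0 α φ) _ hKM0 hbB)
    have hder : ∀ c ∈ Set.Ioo 0 π,
        HasDerivAt (fun x => A0 α φ x * g0F ((n:ℤ):ℝ) t x * wF ((n:ℤ):ℝ) t x)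
          ((B1F α ((n:ℤ):ℝ) t φ c + A0 α φ c) * wF ((n:ℤ):ℝ) t c) c := by
      intro c hc
      exact hFk hc (hdne' c hc) (hA0 (sinpos hc).ne' hφ)
    have hint : IntervalIntegrable
        (fun c => (B1F α ((n:ℤ):ℝ) t φ c + A0 α φ c) * wF ((n:ℤ):ℝ) t c) volume 0 π := by
      have : (fun c => (B1F α ((n:ℤ):ℝ) t φ c + A0 α φ c) * wF ((n:ℤ):ℝ) t c)
          = fun c => B1F α ((n:ℤ):ℝ) t φ c * wF ((n:ℤ):ℝ) t c
            + A0 α φ c * wF ((n:ℤ):ℝ) t c := funext fun c => by ring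
      rw [this]
      exact int1.add int0
    have h00 := intervalIntegral.integral_eq_sub_of_hasDerivAt_of_tendsto
      Real.pi_pos hder hint hT0 hTπ
    rw [sub_zero] at h00
    have hsplit : (∫ c in (0:ℝ)..π, (B1F α ((n:ℤ):ℝ) t φ c + A0 α φ c) * wF ((n:ℤ):ℝ) t c)
        = (∫ c in (0:ℝ)..π, B1F α ((n:ℤ):ℝ) t φ c * wF ((n:ℤ):ℝ) t c)
          + ∫ c in (0:ℝ)..π, A0 α φ c * wF ((n:ℤ):ℝ) t c := by
      rw [show (fun c => (B1F α ((n:ℤ):ℝ) t φ c + A0 α φ c) * wF ((n:ℤ):ℝ) t c)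
          = fun c => B1F α ((n:ℤ):ℝ) t φ c * wF ((n:ℤ):ℝ) t c
            + A0 α φ c * wF ((n:ℤ):ℝ) t c from funext fun c => by ring]
      exact intervalIntegral.integral_add int1 int0
    have hzero : (∫ c in (0:ℝ)..π, B1F α ((n:ℤ):ℝ) t φ c * wF ((n:ℤ):ℝ) t c)
        + (∫ c in (0:ℝ)..π, A0 α φ c * wF ((n:ℤ):ℝ) t c) = 0 := by
      rw [← hsplit, h00]
    exact eq_neg_of_add_eq_zero_right hzero
  -- IBP step k = 1
  have step1 : (∫ c in (0:ℝ)..π, B1F α ((n:ℤ):ℝ) t φ c * wF ((n:ℤ):ℝ) t c)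
      = -∫ c in (0:ℝ)..π, B2F α ((n:ℤ):ℝ) t φ c * wF ((n:ℤ):ℝ) t c := by
    have hCb : (0:ℝ) ≤ 12 * (64 * (1 + ‖α‖) ^ 3 * M) / t :=
      div_nonneg (mul_nonneg (by norm_num) hKM0) ht0.le
    have hbB : ∀ c ∈ Set.Ioo 0 π, ‖B1F α ((n:ℤ):ℝ) t φ c‖
        ≤ (12 * (64 * (1 + ‖α‖) ^ 3 * M) / t) * (Real.sqrt (Real.sin c))⁻¹ :=
      fun c hc => (nB1 hc hα hM hM0 hnR hntR ht1).trans (le_of_eq (by ring))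
    obtain ⟨hT0, hTπ⟩ := tend0 (bdry (B1F α ((n:ℤ):ℝ) t φ) _ hCb hbB)
    have hder : ∀ c ∈ Set.Ioo 0 π,
        HasDerivAt (fun x => B1F α ((n:ℤ):ℝ) t φ x * g0F ((n:ℤ):ℝ) t x * wF ((n:ℤ):ℝ) t x)
          ((B2F α ((n:ℤ):ℝ) t φ c + B1F α ((n:ℤ):ℝ) t φ c) * wF ((n:ℤ):ℝ) t c) c :=
      fun c hc => hFk hc (hdne' c hc) (hB1 (sinpos hc).ne' (hdne' c hc) hφ)
    have hint : IntervalIntegrable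
        (fun c => (B2F α ((n:ℤ):ℝ) t φ c + B1F α ((n:ℤ):ℝ) t φ c) * wF ((n:ℤ):ℝ) t c)
        volume 0 π := by
      rw [show (fun c => (B2F α ((n:ℤ):ℝ) t φ c + B1F α ((n:ℤ):ℝ) t φ c) * wF ((n:ℤ):ℝ) t c)
          = fun c => B2F α ((n:ℤ):ℝ) t φ c * wF ((n:ℤ):ℝ) t c
            + B1F α ((n:ℤ):ℝ) t φ c * wF ((n:ℤ):ℝ) t c from funext fun c => by ring]
      exact int2.add int1
    have h00 := intervalIntegral.integral_eq_sub_of_hasDerivAt_of_tendsto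
      Real.pi_pos hder hint hT0 hTπ
    rw [sub_zero] at h00
    have hsplit : (∫ c in (0:ℝ)..π,
          (B2F α ((n:ℤ):ℝ) t φ c + B1F α ((n:ℤ):ℝ) t φ c) * wF ((n:ℤ):ℝ) t c)
        = (∫ c in (0:ℝ)..π, B2F α ((n:ℤ):ℝ) t φ c * wF ((n:ℤ):ℝ) t c)
          + ∫ c in (0:ℝ)..π, B1F α ((n:ℤ):ℝ) t φ c * wF ((n:ℤ):ℝ) t c := by
      rw [show (fun c => (B2F α ((n:ℤ):ℝ) t φ c + B1F α ((n:ℤ):ℝ) t φ c) * wF ((n:ℤ):ℝ) t c)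
          = fun c => B2F α ((n:ℤ):ℝ) t φ c * wF ((n:ℤ):ℝ) t c
            + B1F α ((n:ℤ):ℝ) t φ c * wF ((n:ℤ):ℝ) t c from funext fun c => by ring]
      exact intervalIntegral.integral_add int2 int1
    have hzero : (∫ c in (0:ℝ)..π, B2F α ((n:ℤ):ℝ) t φ c * wF ((n:ℤ):ℝ) t c)
        + (∫ c in (0:ℝ)..π, B1F α ((n:ℤ):ℝ) t φ c * wF ((n:ℤ):ℝ) t c) = 0 := by
      rw [← hsplit, h00]
    exact eq_neg_of_add_eq_zero_right hzero
  -- IBP step k = 2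
  have step2 : (∫ c in (0:ℝ)..π, B2F α ((n:ℤ):ℝ) t φ c * wF ((n:ℤ):ℝ) t c)
      = -∫ c in (0:ℝ)..π, B3F α ((n:ℤ):ℝ) t φ c * wF ((n:ℤ):ℝ) t c := by
    have hCb : (0:ℝ) ≤ 272 * (64 * (1 + ‖α‖) ^ 3 * M) / t ^ 2 :=
      div_nonneg (mul_nonneg (by norm_num) hKM0) (by positivity)
    have hbB : ∀ c ∈ Set.Ioo 0 π, ‖B2F α ((n:ℤ):ℝ) t φ c‖
        ≤ (272 * (64 * (1 + ‖α‖) ^ 3 * M) / t ^ 2) * (Real.sqrt (Real.sin c))⁻¹ :=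
      fun c hc => (nB2 hc hα hM hM0 hnR hntR ht1).trans (le_of_eq (by ring))
    obtain ⟨hT0, hTπ⟩ := tend0 (bdry (B2F α ((n:ℤ):ℝ) t φ) _ hCb hbB)
    have hder : ∀ c ∈ Set.Ioo 0 π,
        HasDerivAt (fun x => B2F α ((n:ℤ):ℝ) t φ x * g0F ((n:ℤ):ℝ) t x * wF ((n:ℤ):ℝ) t x)
          ((B3F α ((n:ℤ):ℝ) t φ c + B2F α ((n:ℤ):ℝ) t φ c) * wF ((n:ℤ):ℝ) t c) c :=
      fun c hc => hFk hc (hdne' c hc) (hB2 (sinpos hc).ne' (hdne' c hc) hφ)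
    have hint : IntervalIntegrable
        (fun c => (B3F α ((n:ℤ):ℝ) t φ c + B2F α ((n:ℤ):ℝ) t φ c) * wF ((n:ℤ):ℝ) t c)
        volume 0 π := by
      rw [show (fun c => (B3F α ((n:ℤ):ℝ) t φ c + B2F α ((n:ℤ):ℝ) t φ c) * wF ((n:ℤ):ℝ) t c)
          = fun c => B3F α ((n:ℤ):ℝ) t φ c * wF ((n:ℤ):ℝ) t c
            + B2F α ((n:ℤ):ℝ) t φ c * wF ((n:ℤ):ℝ) t c from funext fun c => by ring]
      exact int3.add int2
    have h00 := intervalIntegral.integral_eq_sub_of_hasDerivAt_of_tendsto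
      Real.pi_pos hder hint hT0 hTπ
    rw [sub_zero] at h00
    have hsplit : (∫ c in (0:ℝ)..π,
          (B3F α ((n:ℤ):ℝ) t φ c + B2F α ((n:ℤ):ℝ) t φ c) * wF ((n:ℤ):ℝ) t c)
        = (∫ c in (0:ℝ)..π, B3F α ((n:ℤ):ℝ) t φ c * wF ((n:ℤ):ℝ) t c)
          + ∫ c in (0:ℝ)..π, B2F α ((n:ℤ):ℝ) t φ c * wF ((n:ℤ):ℝ) t c := by
      rw [show (fun c => (B3F α ((n:ℤ):ℝ) t φ c + B2F α ((n:ℤ):ℝ) t φ c) * wF ((n:ℤ):ℝ) t c)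
          = fun c => B3F α ((n:ℤ):ℝ) t φ c * wF ((n:ℤ):ℝ) t c
            + B2F α ((n:ℤ):ℝ) t φ c * wF ((n:ℤ):ℝ) t c from funext fun c => by ring]
      exact intervalIntegral.integral_add int3 int2
    have hzero : (∫ c in (0:ℝ)..π, B3F α ((n:ℤ):ℝ) t φ c * wF ((n:ℤ):ℝ) t c)
        + (∫ c in (0:ℝ)..π, B2F α ((n:ℤ):ℝ) t φ c * wF ((n:ℤ):ℝ) t c) = 0 := by
      rw [← hsplit, h00]
    exact eq_neg_of_add_eq_zero_right hzero
  -- final estimate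
  have hnorm3 : ‖∫ c in (0:ℝ)..π, B3F α ((n:ℤ):ℝ) t φ c * wF ((n:ℤ):ℝ) t c‖
      ≤ 2 * (9408 * (64 * (1 + ‖α‖) ^ 3 * M) / t ^ 3) * Cint :=
    norm_int_le ((contB3 hφ hnR hdne').mul (contW _ _))
      (div_nonneg (mul_nonneg (by norm_num) hKM0) (by positivity)) hb3
  have hr3 : t ^ (-3:ℝ) = (t ^ (3:ℕ))⁻¹ := by
    rw [show (-3:ℝ) = -((3:ℕ):ℝ) by norm_num, Real.rpow_neg ht0.le, Real.rpow_natCast]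
  rw [hGeq, step0, step1, step2]
  have h2c : ‖(2:ℂ)‖ = 2 := by norm_num
  calc ‖(2:ℂ) * -(-(-∫ c in (0:ℝ)..π, B3F α ((n:ℤ):ℝ) t φ c * wF ((n:ℤ):ℝ) t c))‖
      = 2 * ‖∫ c in (0:ℝ)..π, B3F α ((n:ℤ):ℝ) t φ c * wF ((n:ℤ):ℝ) t c‖ := by
        rw [neg_neg, norm_mul, norm_neg, h2c]
    _ ≤ 2 * (2 * (9408 * (64 * (1 + ‖α‖) ^ 3 * M) / t ^ 3) * Cint) := by
        refine mul_le_mul_of_nonneg_left hnorm3 (by norm_num)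
    _ = 37632 * (64 * (1 + ‖α‖) ^ 3) * Cint * M * (t ^ (3:ℕ))⁻¹ := by
        field_simp
        ring
    _ ≤ 37632 * (64 * (1 + ‖α‖) ^ 3) * (Cint + 1) * M * (t ^ (3:ℕ))⁻¹ := by
        have h1 : (0:ℝ) ≤ 37632 * (64 * (1 + ‖α‖) ^ 3) := by positivity
        have h2 : (0:ℝ) ≤ M * (t ^ (3:ℕ))⁻¹ := mul_nonneg hM0 (by positivity)
        nlinarith [mul_nonneg h1 h2]
    _ = 37632 * (64 * (1 + ‖α‖) ^ 3) * (Cint + 1) * M * t ^ (-3:ℝ) := by rw [hr3]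
end
end
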